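/- arXiv:1410.0713 — 7 statements merged into one kernel-verified Lean document; each statement's English description precedes it below -/
import Mathlib

section
/- Let A ⊆ ℤⁿ be generic. If B ⊆ A is neighborly in A, then B is strongly neighborly in A. -/
/-- `Dom α β` means `α ≪ β`: componentwise strict domination. -/
def Dom {n : ℕ} (α β : Fin n → ℤ) : Prop := ∀ i, α i < β i

/-- `vee B` is the componentwise maximum `∨B` of a finite set `B ⊆ ℤⁿ`
(junk value `0` in a component if `B` is empty). -/
def vee {n : ℕ} (B : Finset (Fin n → ℤ)) : Fin n → ℤ :=
  fun i => WithBot.unbotD 0 ((B.image fun α => α i).max)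

/-- `B` is neighborly in `A`: `B` is a nonempty finite subset of `A` and
no `α ∈ A` satisfies `α ≪ ∨B`. -/
def Neighborly {n : ℕ} (A : Set (Fin n → ℤ)) (B : Finset (Fin n → ℤ)) : Prop :=
  B.Nonempty ∧ ↑B ⊆ A ∧ ∀ α ∈ A, ¬ Dom α (vee B)


/-- `B` is strongly neighborly in `A`: `B` is a nonempty finite subset of `A` and
every nonempty finite `B' ⊆ A` with `∨B' = ∨B` equals `B`. -/
def StronglyNeighborly {n : ℕ} (A : Set (Fin n → ℤ)) (B : Finset (Fin n → ℤ)) : Prop :=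
  B.Nonempty ∧ ↑B ⊆ A ∧
    ∀ B' : Finset (Fin n → ℤ), B'.Nonempty → ↑B' ⊆ A → vee B' = vee B → B' = B


/-- `A ⊆ ℤⁿ` is generic: for every `η ∈ ℤⁿ` such that no `α ∈ A` satisfies `α ≪ η`,
and every coordinate `i`, at most one `α ∈ A` has `α ≤ η` and `α i = η i`. -/
def Generic {n : ℕ} (A : Set (Fin n → ℤ)) : Prop :=
  ∀ η : Fin n → ℤ, (∀ α ∈ A, ¬ Dom α η) →
    ∀ i : Fin n, ∀ α ∈ A, ∀ β ∈ A,
      α ≤ η → α i = η i → β ≤ η → β i = η i → α = β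

lemma le_vee {n : ℕ} {B : Finset (Fin n → ℤ)} {α : Fin n → ℤ} (h : α ∈ B) :
    α ≤ vee B := by
  intro i
  have hne : (B.image fun α => α i).Nonempty := ⟨α i, Finset.mem_image_of_mem _ h⟩
  obtain ⟨m, hm⟩ := Finset.max_of_nonempty hne
  have h1 : (α i : WithBot ℤ) ≤ m := hm ▸ Finset.le_max (Finset.mem_image_of_mem _ h)
  simpa [vee, hm] using WithBot.coe_le_coe.mp h1

lemma vee_mem {n : ℕ} {B : Finset (Fin n → ℤ)} (h : B.Nonempty) (i : Fin n) :
    ∃ α ∈ B, α i = vee B i := by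
  have hne : (B.image fun α => α i).Nonempty := h.image _
  obtain ⟨m, hm⟩ := Finset.max_of_nonempty hne
  obtain ⟨α, hα, hαi⟩ := Finset.mem_image.mp (Finset.mem_of_max hm)
  exact ⟨α, hα, by simp [vee, hm, hαi]⟩

theorem stmt2 {n : ℕ} (A : Set (Fin n → ℤ)) (hA : Generic A)
    (B : Finset (Fin n → ℤ)) (hB : Neighborly A B) :
    StronglyNeighborly A B := by
  obtain ⟨hBne, hBsub, hBdom⟩ := hB
  refine ⟨hBne, hBsub, ?_⟩
  intro B' hne' hsub' hveq
  set η := vee B with hη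
  have key := hA η hBdom
  have hle : ∀ α ∈ B, α ≤ η := fun α h => le_vee h
  have hle' : ∀ α ∈ B', α ≤ η := fun α h => hveq ▸ le_vee h
  ext γ
  constructor
  · intro hγ
    have hγA : γ ∈ A := hsub' hγ
    obtain ⟨i, hi⟩ : ∃ i, ¬ γ i < η i := by
      by_contra h; push_neg at h; exact hBdom γ hγA h
    have hγi : γ i = η i := le_antisymm (hle' γ hγ i) (not_lt.mp hi)
    obtain ⟨β, hβ, hβi⟩ := vee_mem hBne i
    exact key i γ hγA β (hBsub hβ) (hle' γ hγ) hγi (hle β hβ) hβi ▸ hβ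
  · intro hγ
    have hγA : γ ∈ A := hBsub hγ
    obtain ⟨i, hi⟩ : ∃ i, ¬ γ i < η i := by
      by_contra h; push_neg at h; exact hBdom γ hγA h
    have hγi : γ i = η i := le_antisymm (hle γ hγ i) (not_lt.mp hi)
    obtain ⟨β, hβ, hβi⟩ := vee_mem hne' i
    have hβi' : β i = η i := by rw [hβi, hveq]
    exact key i γ hγA β (hsub' hβ) (hle γ hγ) hγi (hle' β hβ) hβi' ▸ hβ
end

section
/- Let Λ ⊆ ℤⁿ be an antichain lattice that admits a Markov basis. Then Λ is generic as a subset of ℤⁿ if and only if there exists a minimal Markov basis L of Λ such that every λ ∈ L is fully supported (λᵢ ≠ 0 for every i). -/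
/-- An antichain lattice: a subgroup of `ℤⁿ` no two distinct elements of which are
comparable in the componentwise order. -/
def IsAntichainLattice {n : ℕ} (Λ : AddSubgroup (Fin n → ℤ)) : Prop :=
  ∀ a ∈ Λ, ∀ b ∈ Λ, a ≤ b → a = b

/-- The fiber of `Λ` over `u`: `(u + Λ) ∩ ℕⁿ`. -/
def fiber {n : ℕ} (Λ : AddSubgroup (Fin n → ℤ)) (u : Fin n → ℤ) : Set (Fin n → ℤ) :=
  {v | (∀ i, 0 ≤ v i) ∧ v - u ∈ Λ}

/-- A Markov basis of `Λ`: a finite subset `B ⊆ Λ` such that for every `u ∈ ℕⁿ`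
the graph on the fiber `(u + Λ) ∩ ℕⁿ`, with edges between `v` and `w` whenever
`v - w ∈ B ∪ (-B)`, is connected. -/
def IsMarkovBasis {n : ℕ} (Λ : AddSubgroup (Fin n → ℤ)) (B : Finset (Fin n → ℤ)) : Prop :=
  ↑B ⊆ (Λ : Set (Fin n → ℤ)) ∧
    ∀ u : Fin n → ℤ, (∀ i, 0 ≤ u i) →
      ∀ v ∈ fiber Λ u, ∀ w ∈ fiber Λ u,
        Relation.ReflTransGen
          (fun x y => x ∈ fiber Λ u ∧ y ∈ fiber Λ u ∧ (x - y ∈ B ∨ y - x ∈ B)) v w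

/-- A minimal Markov basis: a Markov basis no proper subset of which is a Markov basis. -/
def IsMinimalMarkovBasis {n : ℕ} (Λ : AddSubgroup (Fin n → ℤ)) (B : Finset (Fin n → ℤ)) : Prop :=
  IsMarkovBasis Λ B ∧ ∀ B' : Finset (Fin n → ℤ), B' ⊂ B → ¬ IsMarkovBasis Λ B'

namespace Stmt6Aux

variable {n : ℕ} {Λ : AddSubgroup (Fin n → ℤ)}

def pp (v : Fin n → ℤ) : Fin n → ℤ := fun i => max (v i) 0
def np (v : Fin n → ℤ) : Fin n → ℤ := fun i => max (-(v i)) 0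

lemma pp_nonneg (v : Fin n → ℤ) (i : Fin n) : (0:ℤ) ≤ pp v i := le_max_right _ _
lemma np_nonneg (v : Fin n → ℤ) (i : Fin n) : (0:ℤ) ≤ np v i := le_max_right _ _
lemma pp_sub_np (v : Fin n → ℤ) : pp v - np v = v := by
  funext i; simp only [Pi.sub_apply, pp, np]; omega

lemma eq_zero_of_nonneg_mem (hΛ : IsAntichainLattice Λ) {a : Fin n → ℤ}
    (ha : a ∈ Λ) (h0 : ∀ i, (0:ℤ) ≤ a i) : a = 0 :=
  (hΛ 0 Λ.zero_mem a ha (fun i => h0 i)).symm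

lemma fiber_finite (hΛ : IsAntichainLattice Λ) (u : Fin n → ℤ) : (fiber Λ u).Finite := by
  by_contra hinf
  have hinf : (fiber Λ u).Infinite := hinf
  let f := (hinf : (fiber Λ u).Infinite).natEmbedding
  have inst : ∀ i : Fin n, IsWellOrder ((fun _ : Fin n => ℕ) i) (· < ·) := fun _ => inferInstance
  set g : ℕ → (Fin n → ℕ) := fun t j => ((f t : Fin n → ℤ) j).toNat with hg
  obtain ⟨a, b, hab, hle⟩ :=
    (wellQuasiOrdered_le (α := Fin n → ℕ)) g
  have hle' : ∀ j, ((f a : Fin n → ℤ)) j ≤ (f b : Fin n → ℤ) j := by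
    intro j
    have h1 := (f a).2.1 j
    have h2 := (f b).2.1 j
    have h3 : g a j ≤ g b j := hle j
    simp only [hg] at h3
    omega
  have hmem1 : ((f a : Fin n → ℤ)) - u ∈ Λ := (f a).2.2
  have hmem2 : ((f b : Fin n → ℤ)) - u ∈ Λ := (f b).2.2
  have heq : ((f a : Fin n → ℤ)) - u = (f b : Fin n → ℤ) - u := by
    refine hΛ _ hmem1 _ hmem2 ?_
    intro j
    simp only [Pi.sub_apply]
    exact sub_le_sub_right (hle' j) _
  have h4 : (f a : Fin n → ℤ) = (f b : Fin n → ℤ) := by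
    have := congrArg (· + u) heq; simpa using this
  have h5 : f a = f b := Subtype.ext h4
  exact absurd (f.injective h5) (Nat.ne_of_lt hab)

def MStep (Λ : AddSubgroup (Fin n → ℤ)) (B : Finset (Fin n → ℤ)) (u x y : Fin n → ℤ) : Prop :=
  x ∈ fiber Λ u ∧ y ∈ fiber Λ u ∧ (x - y ∈ B ∨ y - x ∈ B)

def ReachN (Λ : AddSubgroup (Fin n → ℤ)) (B : Finset (Fin n → ℤ)) (u : Fin n → ℤ) :
    ℕ → (Fin n → ℤ) → (Fin n → ℤ) → Prop
  | 0, v, w => v = w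
  | r+1, v, w => ∃ x, MStep Λ B u v x ∧ ReachN Λ B u r x w

lemma reachN_tail {B : Finset (Fin n → ℤ)} {u v w c : Fin n → ℤ} {r : ℕ}
    (h : ReachN Λ B u r v w) (hs : MStep Λ B u w c) : ReachN Λ B u (r+1) v c := by
  induction r generalizing v with
  | zero => exact ⟨c, h ▸ hs, rfl⟩
  | succ r ih =>
    obtain ⟨x, hx, hr⟩ := h
    exact ⟨x, hx, ih hr⟩

lemma exists_reachN {B : Finset (Fin n → ℤ)} {u v w : Fin n → ℤ}
    (h : Relation.ReflTransGen (MStep Λ B u) v w) : ∃ r, ReachN Λ B u r v w := by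
  induction h with
  | refl => exact ⟨0, rfl⟩
  | tail hrtg hstep ih =>
    obtain ⟨r, hr⟩ := ih
    exact ⟨r+1, reachN_tail hr hstep⟩

lemma mstep_congr {B : Finset (Fin n → ℤ)} {u u' x y : Fin n → ℤ}
    (h : fiber Λ u = fiber Λ u') (hs : MStep Λ B u x y) : MStep Λ B u' x y :=
  ⟨h ▸ hs.1, h ▸ hs.2.1, hs.2.2⟩

lemma reachN_congr {B : Finset (Fin n → ℤ)} {u u' v w : Fin n → ℤ} {r : ℕ}
    (h : fiber Λ u = fiber Λ u') (hs : ReachN Λ B u r v w) : ReachN Λ B u' r v w := by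
  induction r generalizing v with
  | zero => exact hs
  | succ r ih =>
    obtain ⟨x, hx, hr⟩ := hs
    exact ⟨x, mstep_congr h hx, ih hr⟩

/-- coordinatewise toNat-sum -/
def s' (x : Fin n → ℤ) : ℕ := ∑ j, (x j).toNat

lemma s'_add {x y : Fin n → ℤ} (hx : ∀ k, 0 ≤ x k) (hy : ∀ k, 0 ≤ y k) :
    s' (x + y) = s' x + s' y := by
  unfold s'
  rw [← Finset.sum_add_distrib]
  refine Finset.sum_congr rfl fun j _ => ?_
  have := hx j; have := hy j
  simp only [Pi.add_apply]
  omega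

/-- Witness to non-genericity. -/
def Wit (Λ : AddSubgroup (Fin n → ℤ)) (v w : Fin n → ℤ) (i : Fin n) : Prop :=
  (∀ k, 0 ≤ v k) ∧ (∀ k, 0 ≤ w k) ∧ w - v ∈ Λ ∧ v ≠ w ∧ v i = 0 ∧ w i = 0 ∧
    ∀ x ∈ fiber Λ v, ∃ j, x j = 0

lemma no_wit (hΛ : IsAntichainLattice Λ) {L : Finset (Fin n → ℤ)}
    (hL : IsMarkovBasis Λ L) (hfull : ∀ l ∈ L, ∀ i, l i ≠ 0) :
    ¬ ∃ v w i, Wit Λ v w i := by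
  rintro ⟨v₀, w₀, i₀, hW₀⟩
  classical
  set S : Set (ℕ × ℕ × ℕ) :=
    {t | ∃ v w, (∃ i, Wit Λ v w i) ∧
      t = ((fiber Λ v).ncard, sInf (s' '' fiber Λ v), sInf {r | ReachN Λ L v r v w})} with hS
  have hSne : S.Nonempty := ⟨_, v₀, w₀, ⟨i₀, hW₀⟩, rfl⟩
  have wf : WellFounded (Prod.Lex (· < ·) (Prod.Lex (· < ·) (· < · : ℕ → ℕ → Prop))) :=
    WellFounded.prod_lex Nat.lt_wfRel.wf (WellFounded.prod_lex Nat.lt_wfRel.wf Nat.lt_wfRel.wf)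
  obtain ⟨t, ⟨v, w, ⟨i, hW⟩, ht⟩, hmin⟩ := wf.has_min S hSne
  obtain ⟨hv0, hw0, hwvΛ, hvw, hvi, hwi, htight⟩ := hW
  have hvfib : v ∈ fiber Λ v := ⟨hv0, by rw [sub_self]; exact Λ.zero_mem⟩
  have hwfib : w ∈ fiber Λ v := ⟨hw0, hwvΛ⟩
  set P := pp (v - w) with hP
  set N := np (v - w) with hN
  have hPv : ∀ k, P k ≤ v k := by
    intro k
    have h1 := hv0 k; have h2 := hw0 k
    simp only [hP, pp, Pi.sub_apply]
    omega
  set m := v - P with hm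
  have hm0 : ∀ k, 0 ≤ m k := by
    intro k
    simp only [hm, Pi.sub_apply]
    exact sub_nonneg.mpr (hPv k)
  have hPN : N - P = w - v := by
    funext k
    simp only [hN, hP, np, pp, Pi.sub_apply, Pi.neg_apply]
    omega
  have hP0 : ∀ k, (0:ℤ) ≤ P k := fun k => pp_nonneg _ k
  have hN0 : ∀ k, (0:ℤ) ≤ N k := fun k => np_nonneg _ k
  have hPi : P i = 0 := by
    simp only [hP, pp, Pi.sub_apply, hvi, hwi]
    simp
  have hNi : N i = 0 := by
    simp only [hN, np, Pi.sub_apply, hvi, hwi]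
    simp
  have hPneN : P ≠ N := by
    intro h
    apply hvw
    have h2 : P - N = v - w := pp_sub_np (v - w)
    rw [h, sub_self] at h2
    have := h2.symm
    rwa [sub_eq_zero] at this
  have hemb : ∀ x ∈ fiber Λ P, x + m ∈ fiber Λ v := by
    rintro x ⟨hx0, hxΛ⟩
    refine ⟨fun k => add_nonneg (hx0 k) (hm0 k), ?_⟩
    have he : x + m - v = x - P := by rw [hm]; abel
    rw [he]; exact hxΛ
  have hWit' : Wit Λ P N i := by
    refine ⟨hP0, hN0, by rw [hPN]; exact hwvΛ, hPneN, hPi, hNi, ?_⟩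
    intro x hx
    obtain ⟨j, hj⟩ := htight (x + m) (hemb x hx)
    refine ⟨j, ?_⟩
    have h1 := hx.1 j; have h2 := hm0 j
    have h3 : x j + m j = 0 := hj
    omega
  have hPfib : P ∈ fiber Λ P := ⟨hP0, by rw [sub_self]; exact Λ.zero_mem⟩
  have hNfib : N ∈ fiber Λ P := ⟨hN0, by rw [hPN]; exact hwvΛ⟩
  by_cases hcase : v = P
  · -- v = P, so w = N ; inner induction on path length
    have hweq : ∀ k, v k = max (v k - w k) 0 := by
      intro k
      have := congrFun hcase k
      simpa [hP, pp] using this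
    have hdisj : ∀ k, 0 < v k → w k = 0 := by
      intro k hk
      have h1 := hweq k
      have := hw0 k
      omega
    set r := sInf {r | ReachN Λ L v r v w} with hrdef
    have hrne : {r | ReachN Λ L v r v w}.Nonempty :=
      exists_reachN (hL.2 v hv0 v hvfib w hwfib)
    have hrr : ReachN Λ L v r v w := Nat.sInf_mem hrne
    have hrpos : r ≠ 0 := by
      intro h0
      rw [h0] at hrr
      exact hvw hrr
    obtain ⟨r', hr'⟩ : ∃ r', r = r' + 1 := ⟨r - 1, by omega⟩
    rw [hr'] at hrr
    obtain ⟨x₁, hstep, hrest⟩ := hrr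
    have hx₁fib : x₁ ∈ fiber Λ v := hstep.2.1
    have hdne : ∀ k, v k - x₁ k ≠ 0 := by
      rcases hstep.2.2 with hd | hd
      · intro k
        have := hfull _ hd k
        simpa using this
      · intro k
        have := hfull _ hd k
        simp only [Pi.sub_apply] at this ⊢
        omega
    rcases Nat.eq_zero_or_pos r' with hr0 | hr1
    · rw [hr0] at hrest
      have : x₁ i = 0 := by rw [← hrest] at hwi; exact hwi
      have := hdne i
      omega
    · have hx₁new : x₁ ≠ w := by
        intro h
        have h1 : ReachN Λ L v 1 v w := ⟨x₁, hstep, h⟩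
        have h2 : r ≤ 1 := Nat.sInf_le h1
        omega
      obtain ⟨k, hk⟩ := htight x₁ hx₁fib
      have hvk : 0 < v k := by
        have := hdne k; have := hv0 k; omega
      have hwk : w k = 0 := hdisj k hvk
      have hvx1 : v - x₁ ∈ Λ := by
        rcases hstep.2.2 with hd | hd
        · exact hL.1 hd
        · have := Λ.neg_mem (hL.1 hd)
          rwa [neg_sub] at this
      have hfibeq : fiber Λ x₁ = fiber Λ v := by
        ext x
        constructor <;> rintro ⟨h0, hmem⟩ <;> refine ⟨h0, ?_⟩
        · have hx1v : x₁ - v ∈ Λ := hx₁fib.2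
          have he : x - v = (x - x₁) + (x₁ - v) := by abel
          rw [he]; exact Λ.add_mem hmem hx1v
        · have he : x - x₁ = (x - v) + (v - x₁) := by abel
          rw [he]; exact Λ.add_mem hmem hvx1
      have hWitnew : Wit Λ x₁ w k := by
        refine ⟨hx₁fib.1, hw0, ?_, hx₁new, hk, hwk, ?_⟩
        · have he : w - x₁ = (w - v) + (v - x₁) := by abel
          rw [he]; exact Λ.add_mem hwvΛ hvx1
        · rw [hfibeq]; exact htight
      have hm3new : sInf {r2 | ReachN Λ L x₁ r2 x₁ w} ≤ r' :=
        Nat.sInf_le (reachN_congr hfibeq.symm hrest)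
      refine hmin _ ⟨x₁, w, ⟨k, hWitnew⟩, rfl⟩ ?_
      rw [ht, hfibeq]
      exact Prod.Lex.right _ (Prod.Lex.right _ (by omega))
  · -- v ≠ P : fiber of P is strictly smaller in the (ncard, sInf) lex order
    have hmne : m ≠ 0 := by
      intro h
      apply hcase
      have : v - P = 0 := h
      have := sub_eq_zero.mp this
      exact this
    have himgsub : (· + m) '' fiber Λ P ⊆ fiber Λ v := by
      rintro _ ⟨x, hx, rfl⟩
      exact hemb x hx
    have hinj : Function.Injective (· + m) := add_left_injective m
    have hcard_le : (fiber Λ P).ncard ≤ (fiber Λ v).ncard := by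
      rw [← Set.ncard_image_of_injective (fiber Λ P) hinj]
      exact Set.ncard_le_ncard himgsub (fiber_finite hΛ v)
    rcases lt_or_eq_of_le hcard_le with hlt | hcard_eq
    · refine hmin _ ⟨P, N, ⟨i, hWit'⟩, rfl⟩ ?_
      rw [ht]
      exact Prod.Lex.left _ _ hlt
    · have himg_eq : (· + m) '' fiber Λ P = fiber Λ v := by
        refine Set.eq_of_subset_of_ncard_le himgsub ?_ (fiber_finite hΛ v)
        rw [Set.ncard_image_of_injective (fiber Λ P) hinj]
        omega
      have hsm : 0 < s' m := by
        obtain ⟨k, hkne⟩ := Function.ne_iff.mp hmne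
        have h1 := hm0 k
        have h2 : 0 < (m k).toNat := by
          simp only [Pi.zero_apply] at hkne
          omega
        calc 0 < (m k).toNat := h2
          _ ≤ s' m := Finset.single_le_sum (f := fun j => (m j).toNat) (fun j _ => Nat.zero_le _) (Finset.mem_univ k)
      have hne2 : (s' '' fiber Λ v).Nonempty := ⟨s' v, v, hvfib, rfl⟩
      obtain ⟨y0, hy0fib, hy0⟩ := Nat.sInf_mem hne2
      obtain ⟨x0, hx0, hx0e⟩ := himg_eq ▸ hy0fib
      have hm2P : sInf (s' '' fiber Λ P) ≤ s' x0 := Nat.sInf_le ⟨x0, hx0, rfl⟩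
      have hsy0 : s' y0 = s' x0 + s' m := by
        rw [← hx0e]
        exact s'_add hx0.1 hm0
      have hm2lt : sInf (s' '' fiber Λ P) < sInf (s' '' fiber Λ v) := by
        omega
      refine hmin _ ⟨P, N, ⟨i, hWit'⟩, rfl⟩ ?_
      rw [ht, hcard_eq]
      exact Prod.Lex.right _ (Prod.Lex.left _ _ hm2lt)


lemma generic_of_fullsupport (hΛ : IsAntichainLattice Λ) {L : Finset (Fin n → ℤ)}
    (hL : IsMarkovBasis Λ L) (hfull : ∀ l ∈ L, ∀ i, l i ≠ 0) :
    Generic (Λ : Set (Fin n → ℤ)) := by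
  intro η hceil i α hα β hβ hαle hαi hβle hβi
  by_contra hne
  refine no_wit hΛ hL hfull ⟨η - α, η - β, i, ?_, ?_, ?_, ?_, ?_, ?_, ?_⟩
  · intro k; exact sub_nonneg.mpr (hαle k)
  · intro k; exact sub_nonneg.mpr (hβle k)
  · have he : (η - β) - (η - α) = α - β := by abel
    rw [he]; exact Λ.sub_mem hα hβ
  · intro h
    exact hne (sub_right_injective h)
  · simp only [Pi.sub_apply, hαi, sub_self]
  · simp only [Pi.sub_apply, hβi, sub_self]
  · rintro x ⟨hx0, hxΛ⟩
    by_contra hno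
    push_neg at hno
    have hxpos : ∀ j, 0 < x j := fun j => lt_of_le_of_ne (hx0 j) (Ne.symm (hno j))
    have hγ : η - x ∈ Λ := by
      have h2 : η - x = α - (x - (η - α)) := by abel
      rw [h2]; exact Λ.sub_mem hα hxΛ
    refine hceil (η - x) hγ (fun j => ?_)
    simp only [Pi.sub_apply]
    exact sub_lt_self _ (hxpos j)

lemma markov_erase_zero {L : Finset (Fin n → ℤ)} (hL : IsMarkovBasis Λ L) :
    IsMarkovBasis Λ (L.erase 0) := by
  classical
  refine ⟨Set.Subset.trans (Finset.coe_subset.mpr (Finset.erase_subset _ _)) hL.1, ?_⟩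
  intro u hu v hv w hw
  have h := hL.2 u hu v hv w hw
  clear hv hw
  induction h with
  | refl => exact Relation.ReflTransGen.refl
  | @tail b c hrtg hstep ih =>
    rcases hstep with ⟨hb, hc, hd | hd⟩
    · by_cases h0 : b - c = 0
      · have hbc : b = c := sub_eq_zero.mp h0
        exact hbc ▸ ih
      · exact ih.tail ⟨hb, hc, Or.inl (Finset.mem_erase.mpr ⟨h0, hd⟩)⟩
    · by_cases h0 : c - b = 0
      · have hbc : c = b := sub_eq_zero.mp h0
        exact hbc ▸ ih
      · exact ih.tail ⟨hb, hc, Or.inr (Finset.mem_erase.mpr ⟨h0, hd⟩)⟩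

lemma exists_minimal_markov (hex : ∃ B : Finset (Fin n → ℤ), IsMarkovBasis Λ B) :
    ∃ B, IsMarkovBasis Λ B ∧ ∀ B' : Finset (Fin n → ℤ), B' ⊂ B → ¬ IsMarkovBasis Λ B' := by
  obtain ⟨B₀, hB₀⟩ := hex
  have hSne : {k | ∃ B : Finset (Fin n → ℤ), IsMarkovBasis Λ B ∧ B.card = k}.Nonempty :=
    ⟨B₀.card, B₀, hB₀, rfl⟩
  obtain ⟨B, hB, hcard⟩ := Nat.sInf_mem hSne
  refine ⟨B, hB, fun B' hsub hB' => ?_⟩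
  have h1 : sInf {k | ∃ B : Finset (Fin n → ℤ), IsMarkovBasis Λ B ∧ B.card = k} ≤ B'.card :=
    Nat.sInf_le ⟨B', hB', rfl⟩
  have h2 : B'.card < B.card := Finset.card_lt_card hsub
  omega

lemma markov_erase_of_interior (hΛ : IsAntichainLattice Λ) {L : Finset (Fin n → ℤ)}
    (hL : IsMarkovBasis Λ L) {l : Fin n → ℤ} (hl : l ∈ L) (hlne : l ≠ 0)
    {z : Fin n → ℤ} (hz : ∀ j, 0 < z j) (hzΛ : z - pp l ∈ Λ) :
    IsMarkovBasis Λ (L.erase l) := by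
  classical
  have hlΛ : l ∈ Λ := hL.1 (Finset.mem_coe.mpr hl)
  have hnppp : np l - pp l = -l := by
    have h1 : np l - pp l = -(pp l - np l) := by abel
    rw [h1, pp_sub_np]
  have hppfib : pp l ∈ fiber Λ (pp l) := ⟨fun k => pp_nonneg l k, by rw [sub_self]; exact Λ.zero_mem⟩
  have hnpfib : np l ∈ fiber Λ (pp l) := ⟨fun k => np_nonneg l k, by rw [hnppp]; exact Λ.neg_mem hlΛ⟩
  have hzfib : z ∈ fiber Λ (pp l) := ⟨fun j => le_of_lt (hz j), hzΛ⟩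
  have hppne : ∃ j, 0 < pp l j := by
    by_contra h
    push_neg at h
    apply hlne
    have h1 : ∀ j, l j ≤ 0 := by
      intro j
      have h2 := h j
      simp only [pp] at h2
      omega
    have h2 : (-l : Fin n → ℤ) = 0 :=
      eq_zero_of_nonneg_mem hΛ (Λ.neg_mem hlΛ) (fun j => by have := h1 j; simp only [Pi.neg_apply]; omega)
    have h3 := congrArg Neg.neg h2
    simpa using h3
  have hnpne : ∃ j, 0 < np l j := by
    by_contra h
    push_neg at h
    apply hlne
    have h1 : ∀ j, 0 ≤ l j := by
      intro j
      have h2 := h j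
      simp only [np] at h2
      omega
    exact eq_zero_of_nonneg_mem hΛ hlΛ h1
  -- connector: any two fiber elements sharing a positive coordinate are connected avoiding l
  have conn : ∀ a b, a ∈ fiber Λ (pp l) → b ∈ fiber Λ (pp l) → ∀ j, 0 < a j → 0 < b j →
      Relation.ReflTransGen (MStep Λ (L.erase l) (pp l)) a b := by
    intro a b ha hb j haj hbj
    set e : Fin n → ℤ := fun k => if k = j then 1 else 0 with he
    have he0 : ∀ k, 0 ≤ e k := by
      intro k; simp only [he]; split <;> norm_num
    have hej : e j = 1 := by simp [he]
    set u' := a - e with hu'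
    have hu'0 : ∀ k, 0 ≤ u' k := by
      intro k
      by_cases hk : k = j
      · subst hk
        simp only [hu', Pi.sub_apply, hej]
        omega
      · simp only [hu', Pi.sub_apply, he, if_neg hk, sub_zero]
        exact ha.1 k
    have hafib' : a - e ∈ fiber Λ u' := ⟨hu'0, by rw [sub_self]; exact Λ.zero_mem⟩
    have hbfib' : b - e ∈ fiber Λ u' := by
      refine ⟨?_, ?_⟩
      · intro k
        by_cases hk : k = j
        · subst hk
          simp only [Pi.sub_apply, hej]
          omega
        · simp only [Pi.sub_apply, he, if_neg hk, sub_zero]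
          exact hb.1 k
      · have h1 : (b - e) - u' = (b - pp l) - (a - pp l) := by rw [hu']; abel
        rw [h1]; exact Λ.sub_mem hb.2 ha.2
    have h := hL.2 u' hu'0 (a - e) hafib' (b - e) hbfib'
    have h' : Relation.ReflTransGen (MStep Λ L u') (a - e) (b - e) := h
    have hmemfib : ∀ c : Fin n → ℤ, c ∈ fiber Λ u' → c + e ∈ fiber Λ (pp l) := by
      rintro c ⟨hc0, hcΛ⟩
      refine ⟨fun k => add_nonneg (hc0 k) (he0 k), ?_⟩
      have hrw : c + e - pp l = (c - u') + (a - pp l) := by rw [hu']; abel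
      rw [hrw]; exact Λ.add_mem hcΛ ha.2
    have hnotl : ∀ c d : Fin n → ℤ, c ∈ fiber Λ u' → d ∈ fiber Λ u' → c - d = l → False := by
      intro c d hc hd' hcd
      have hcge : ∀ k, pp l k ≤ c k := by
        intro k
        have h1 := hc.1 k
        have h2 := hd'.1 k
        have h3 : c k - d k = l k := congrFun hcd k
        simp only [pp]
        omega
      have hmem2 : (c + e) - pp l ∈ Λ := (hmemfib c hc).2
      have hge : ∀ k, 0 ≤ (c + e - pp l) k := by
        intro k
        have h1 := hcge k
        have h2 := he0 k
        simp only [Pi.add_apply, Pi.sub_apply]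
        omega
      have hzero := eq_zero_of_nonneg_mem hΛ hmem2 hge
      have h4 := congrFun hzero j
      have h5 := hcge j
      simp only [Pi.add_apply, Pi.sub_apply, hej, Pi.zero_apply] at h4
      omega
    have key : ∀ x y, Relation.ReflTransGen (MStep Λ L u') x y →
        Relation.ReflTransGen (MStep Λ (L.erase l) (pp l)) (x + e) (y + e) := by
      intro x y hxy
      induction hxy with
      | refl => exact Relation.ReflTransGen.refl
      | @tail p q hrtg hstep ih =>
        rcases hstep with ⟨hp, hq, hd⟩
        refine ih.tail ⟨hmemfib p hp, hmemfib q hq, ?_⟩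
        have hd2 : (p + e) - (q + e) = p - q := by abel
        have hd3 : (q + e) - (p + e) = q - p := by abel
        rcases hd with hd | hd
        · refine Or.inl ?_
          rw [hd2]
          exact Finset.mem_erase.mpr ⟨fun hh => hnotl p q hp hq hh, hd⟩
        · refine Or.inr ?_
          rw [hd3]
          exact Finset.mem_erase.mpr ⟨fun hh => hnotl q p hq hp hh, hd⟩
    have h2 := key _ _ h'
    have hae : a - e + e = a := by abel
    have hbe : b - e + e = b := by abel
    rw [hae, hbe] at h2
    exact h2
  have bridge : Relation.ReflTransGen (MStep Λ (L.erase l) (pp l)) (pp l) (np l) := by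
    obtain ⟨jp, hjp⟩ := hppne
    obtain ⟨jm, hjm⟩ := hnpne
    exact (conn (pp l) z hppfib hzfib jp hjp (hz jp)).trans
      (conn z (np l) hzfib hnpfib jm (hz jm) hjm)
  refine ⟨Set.Subset.trans (Finset.coe_subset.mpr (Finset.erase_subset _ _)) hL.1, ?_⟩
  intro u hu v hv w hw
  have h := hL.2 u hu v hv w hw
  clear hv hw
  have htrans : ∀ (p : Fin n → ℤ), (∀ k, 0 ≤ p k) → (pp l + p) - u ∈ Λ →
      ∀ x y, Relation.ReflTransGen (MStep Λ (L.erase l) (pp l)) x y →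
      Relation.ReflTransGen (MStep Λ (L.erase l) u) (x + p) (y + p) := by
    intro p hp0 hpu x y hxy
    induction hxy with
    | refl => exact Relation.ReflTransGen.refl
    | @tail c d hrtg hstep ih =>
      rcases hstep with ⟨hc, hd', hdd⟩
      have hmm : ∀ c' : Fin n → ℤ, c' ∈ fiber Λ (pp l) → c' + p ∈ fiber Λ u := by
        rintro c' ⟨h0, hΛ'⟩
        refine ⟨fun k => add_nonneg (h0 k) (hp0 k), ?_⟩
        have h1 : c' + p - u = (c' - pp l) + ((pp l + p) - u) := by abel
        rw [h1]; exact Λ.add_mem hΛ' hpu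
      refine ih.tail ⟨hmm c hc, hmm d hd', ?_⟩
      have h1 : c + p - (d + p) = c - d := by abel
      have h2 : d + p - (c + p) = d - c := by abel
      rcases hdd with hdd | hdd
      · exact Or.inl (by rw [h1]; exact hdd)
      · exact Or.inr (by rw [h2]; exact hdd)
  induction h with
  | refl => exact Relation.ReflTransGen.refl
  | @tail c d hrtg hstep ih =>
    rcases hstep with ⟨hc, hd', hdd⟩
    refine ih.trans ?_
    rcases hdd with hdd | hdd
    · by_cases hisl : c - d = l
      · set p := c - pp l with hp
        have hcge : ∀ k, pp l k ≤ c k := by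
          intro k
          have h1 := hc.1 k
          have h2 := hd'.1 k
          have h3 : c k - d k = l k := congrFun hisl k
          simp only [pp]
          omega
        have hp0 : ∀ k, 0 ≤ p k := by
          intro k
          simp only [hp, Pi.sub_apply]
          have := hcge k
          omega
        have hpu : (pp l + p) - u ∈ Λ := by
          have h1 : pp l + p - u = c - u := by rw [hp]; abel
          rw [h1]; exact hc.2
        have h4 := htrans p hp0 hpu _ _ bridge
        have h5 : pp l + p = c := by rw [hp]; abel
        have h6 : np l + p = d := by
          have h8 : c - l = d := by rw [← hisl]; abel
          rw [hp, ← h8]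
          have h7 : np l = pp l - l := by funext k; simp only [np, pp, Pi.sub_apply]; omega
          rw [h7]; abel
        rw [h5, h6] at h4
        exact h4
      · exact Relation.ReflTransGen.single ⟨hc, hd', Or.inl (Finset.mem_erase.mpr ⟨hisl, hdd⟩)⟩
    · by_cases hisl : d - c = l
      · have hsym : Symmetric (MStep Λ (L.erase l) (pp l)) := by
          rintro x y ⟨h1, h2, h3⟩
          exact ⟨h2, h1, h3.symm⟩
        have bridge' : Relation.ReflTransGen (MStep Λ (L.erase l) (pp l)) (np l) (pp l) :=
          (haveI : Std.Symm (MStep Λ (L.erase l) (pp l)) := ⟨fun a b h => hsym h⟩; Std.Symm.symm _ _ bridge)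
        set p := d - pp l with hp
        have hdge : ∀ k, pp l k ≤ d k := by
          intro k
          have h1 := hc.1 k
          have h2 := hd'.1 k
          have h3 : d k - c k = l k := congrFun hisl k
          simp only [pp]
          omega
        have hp0 : ∀ k, 0 ≤ p k := by
          intro k
          simp only [hp, Pi.sub_apply]
          have := hdge k
          omega
        have hpu : (pp l + p) - u ∈ Λ := by
          have h1 : pp l + p - u = d - u := by rw [hp]; abel
          rw [h1]; exact hd'.2
        have h4 := htrans p hp0 hpu _ _ bridge'
        have h5 : pp l + p = d := by rw [hp]; abel
        have h6 : np l + p = c := by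
          have h8 : d - l = c := by rw [← hisl]; abel
          rw [hp, ← h8]
          have h7 : np l = pp l - l := by funext k; simp only [np, pp, Pi.sub_apply]; omega
          rw [h7]; abel
        rw [h5, h6] at h4
        exact h4
      · exact Relation.ReflTransGen.single ⟨hc, hd', Or.inr (Finset.mem_erase.mpr ⟨hisl, hdd⟩)⟩


end Stmt6Aux

theorem stmt6 {n : ℕ} (Λ : AddSubgroup (Fin n → ℤ)) (hΛ : IsAntichainLattice Λ)
    (hex : ∃ B : Finset (Fin n → ℤ), IsMarkovBasis Λ B) :
    Generic (Λ : Set (Fin n → ℤ)) ↔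
      ∃ L : Finset (Fin n → ℤ), IsMinimalMarkovBasis Λ L ∧ ∀ l ∈ L, ∀ i, l i ≠ 0 := by
  classical
  constructor
  · intro hG
    obtain ⟨L, hL, hmin⟩ := Stmt6Aux.exists_minimal_markov hex
    refine ⟨L, ⟨hL, hmin⟩, ?_⟩
    intro l hl i
    by_contra hli
    have hl0 : l ≠ 0 := by
      intro h
      exact hmin (L.erase 0) (h ▸ Finset.erase_ssubset hl) (Stmt6Aux.markov_erase_zero hL)
    by_cases hceil : ∀ γ ∈ (Λ : Set (Fin n → ℤ)), ¬ Dom γ (Stmt6Aux.pp l)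
    · have h0m : (0 : Fin n → ℤ) ∈ (Λ : Set (Fin n → ℤ)) := Λ.zero_mem
      have hlm : l ∈ (Λ : Set (Fin n → ℤ)) := hL.1 (Finset.mem_coe.mpr hl)
      have hle1 : (0 : Fin n → ℤ) ≤ Stmt6Aux.pp l := fun k => Stmt6Aux.pp_nonneg l k
      have hi1 : (0 : Fin n → ℤ) i = Stmt6Aux.pp l i := by
        simp [Stmt6Aux.pp, hli]
      have hle2 : l ≤ Stmt6Aux.pp l := fun k => le_max_left _ _
      have hi2 : l i = Stmt6Aux.pp l i := by
        simp [Stmt6Aux.pp, hli]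
      have := hG (Stmt6Aux.pp l) hceil i 0 h0m l hlm hle1 hi1 hle2 hi2
      exact hl0 this.symm
    · push_neg at hceil
      obtain ⟨γ, hγ, hdom⟩ := hceil
      have hdom' : ∀ j, γ j < Stmt6Aux.pp l j := hdom
      have hz : ∀ j, 0 < (Stmt6Aux.pp l - γ) j := by
        intro j
        simp only [Pi.sub_apply]
        have := hdom' j
        omega
      have hzΛ : (Stmt6Aux.pp l - γ) - Stmt6Aux.pp l ∈ Λ := by
        have h1 : Stmt6Aux.pp l - γ - Stmt6Aux.pp l = -γ := by abel
        rw [h1]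
        exact Λ.neg_mem hγ
      exact hmin (L.erase l) (Finset.erase_ssubset hl)
        (Stmt6Aux.markov_erase_of_interior hΛ hL hl hl0 hz hzΛ)
  · rintro ⟨L, ⟨hL, _⟩, hfull⟩
    exact Stmt6Aux.generic_of_fullsupport hΛ hL hfull
end

section
/- Let Λ ⊆ ℤⁿ be an antichain lattice and A ⊆ ℤⁿ a generic Λ-finite set. For i ≥ 0 let N_i(A) be the collection of strongly neighborly subsets of A of cardinality i + 1. Then: (a) for every σ ∈ N_i(A) and λ ∈ Λ, the translate σ + λ = {α + λ : α ∈ σ} belongs to N_i(A); and (b) N_i(A) has only finitely many orbits under this Λ-action, i.e., there is a finite collection σ₁, …, σ_m ∈ N_i(A) such that every σ ∈ N_i(A) equals σ_j + λ for some j and some λ ∈ Λ. -/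
/-- `A ⊆ ℤⁿ` is `Λ`-finite: `A = A₀ + Λ` for a finite `A₀ ⊆ A` whose elements lie in
pairwise distinct cosets of `Λ`. -/
def LambdaFinite {n : ℕ} (Λ : AddSubgroup (Fin n → ℤ)) (A : Set (Fin n → ℤ)) : Prop :=
  ∃ A₀ : Finset (Fin n → ℤ), ↑A₀ ⊆ A ∧
    A = {x : Fin n → ℤ | ∃ a ∈ A₀, ∃ l ∈ Λ, x = a + l} ∧
    ∀ a ∈ A₀, ∀ b ∈ A₀, a - b ∈ Λ → a = b

section helpers
variable {n : ℕ}

lemma vee_eq_max' (B : Finset (Fin n → ℤ)) (hB : B.Nonempty) (j : Fin n) :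
    vee B j = (B.image (fun α => α j)).max' (hB.image _) := by
  have h : vee B j = WithBot.unbotD 0 ((B.image fun α => α j).max) := rfl
  rw [h, ← Finset.coe_max' (hB.image fun α => α j), WithBot.unbotD_coe]

lemma le_vee_s8 {B : Finset (Fin n → ℤ)} (hB : B.Nonempty) {β : Fin n → ℤ} (hβ : β ∈ B) (j : Fin n) :
    β j ≤ vee B j := by
  rw [vee_eq_max' B hB j]
  exact Finset.le_max' _ _ (Finset.mem_image_of_mem (fun α => α j) hβ)

lemma exists_vee_eq (B : Finset (Fin n → ℤ)) (hB : B.Nonempty) (j : Fin n) :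
    ∃ β ∈ B, β j = vee B j := by
  rw [vee_eq_max' B hB j]
  have := Finset.max'_mem (B.image (fun α => α j)) ((hB.image _))
  rcases Finset.mem_image.mp this with ⟨β, hβ, h⟩
  exact ⟨β, hβ, h⟩

lemma vee_image_add (B : Finset (Fin n → ℤ)) (hB : B.Nonempty) (l : Fin n → ℤ) :
    vee (B.image (· + l)) = vee B + l := by
  funext j
  have hne := hB.image (· + l)
  apply le_antisymm
  · obtain ⟨γ, hγ, hγj⟩ := exists_vee_eq _ hne j
    obtain ⟨β, hβ, rfl⟩ := Finset.mem_image.mp hγ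
    rw [← hγj]
    have := le_vee_s8 hB hβ j
    simp only [Pi.add_apply]
    omega
  · obtain ⟨β, hβ, hβj⟩ := exists_vee_eq B hB j
    have := le_vee_s8 hne (Finset.mem_image_of_mem (· + l) hβ) j
    simp only [Pi.add_apply] at this ⊢
    omega

lemma image_add_add_neg (C : Finset (Fin n → ℤ)) (m : Fin n → ℤ) :
    (C.image (· + m)).image (· + (-m)) = C := by
  rw [Finset.image_image]
  have : ((· + (-m)) ∘ (· + m) : (Fin n → ℤ) → (Fin n → ℤ)) = id := by
    funext x; simp
  rw [this, Finset.image_id]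

lemma mem_A_add {Λ : AddSubgroup (Fin n → ℤ)} {A : Set (Fin n → ℤ)} (hA : LambdaFinite Λ A)
    {x : Fin n → ℤ} (hx : x ∈ A) {l : Fin n → ℤ} (hl : l ∈ Λ) : x + l ∈ A := by
  obtain ⟨A₀, hsub, hEq, hdist⟩ := hA
  rw [hEq] at hx ⊢
  obtain ⟨a, ha, m, hm, rfl⟩ := hx
  exact ⟨a, ha, m + l, add_mem hm hl, by abel⟩

lemma SN_translate {Λ : AddSubgroup (Fin n → ℤ)} {A : Set (Fin n → ℤ)} (hA : LambdaFinite Λ A)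
    {σ : Finset (Fin n → ℤ)} (hσ : StronglyNeighborly A σ) {l : Fin n → ℤ} (hl : l ∈ Λ) :
    StronglyNeighborly A (σ.image (· + l)) := by
  obtain ⟨hne, hsubA, huniq⟩ := hσ
  refine ⟨hne.image _, ?_, ?_⟩
  · intro x hx
    simp only [Finset.coe_image, Set.mem_image, Finset.mem_coe] at hx
    obtain ⟨α, hα, rfl⟩ := hx
    exact mem_A_add hA (hsubA hα) hl
  · intro B' hB'ne hB'sub hveq
    have h1 : B'.image (· + (-l)) = σ := by
      apply huniq _ (hB'ne.image _)
      · intro x hx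
        simp only [Finset.coe_image, Set.mem_image, Finset.mem_coe] at hx
        obtain ⟨α, hα, rfl⟩ := hx
        exact mem_A_add hA (hB'sub hα) (neg_mem hl)
      · rw [vee_image_add B' hB'ne, hveq, vee_image_add σ hne]
        funext j; simp
    have h2 : (B'.image (· + (-l))).image (· + l) = B' := by
      have := image_add_add_neg B' (-l)
      simpa using this
    rw [← h2, h1]

lemma SN_not_dom [Nonempty (Fin n)] {A : Set (Fin n → ℤ)}
    {σ : Finset (Fin n → ℤ)} (hσ : StronglyNeighborly A σ) :
    ∀ α ∈ A, ¬ Dom α (vee σ) := by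
  obtain ⟨hne, hsub, huniq⟩ := hσ
  intro α hα hdom
  by_cases hmem : α ∈ σ
  · have hne' : (σ.erase α).Nonempty := by
      obtain ⟨i⟩ := ‹Nonempty (Fin n)›
      obtain ⟨β, hβ, hβi⟩ := exists_vee_eq σ hne i
      have hβα : β ≠ α := by
        intro h; subst h
        exact absurd hβi (ne_of_lt (hdom i))
      exact ⟨β, Finset.mem_erase.mpr ⟨hβα, hβ⟩⟩
    have hvee : vee (σ.erase α) = vee σ := by
      funext j
      apply le_antisymm
      · obtain ⟨γ, hγ, hγj⟩ := exists_vee_eq _ hne' j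
        rw [← hγj]; exact le_vee_s8 hne (Finset.mem_of_mem_erase hγ) j
      · obtain ⟨β, hβ, hβj⟩ := exists_vee_eq σ hne j
        have hβα : β ≠ α := by
          intro h; subst h
          exact absurd hβj (ne_of_lt (hdom j))
        rw [← hβj]; exact le_vee_s8 hne' (Finset.mem_erase.mpr ⟨hβα, hβ⟩) j
    have heq := huniq _ hne'
      (fun x hx => hsub (Finset.mem_coe.mpr (Finset.mem_of_mem_erase (Finset.mem_coe.mp hx))))
      hvee
    have hcontra : α ∈ σ.erase α := by rw [heq]; exact hmem
    exact (Finset.notMem_erase α σ) hcontra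
  · have hne' : (insert α σ).Nonempty := Finset.insert_nonempty _ _
    have hvee : vee (insert α σ) = vee σ := by
      funext j
      apply le_antisymm
      · obtain ⟨γ, hγ, hγj⟩ := exists_vee_eq _ hne' j
        rcases Finset.mem_insert.mp hγ with rfl | hγ'
        · rw [← hγj]; exact le_of_lt (hdom j)
        · rw [← hγj]; exact le_vee_s8 hne hγ' j
      · obtain ⟨β, hβ, hβj⟩ := exists_vee_eq σ hne j
        rw [← hβj]; exact le_vee_s8 hne' (Finset.mem_insert_of_mem hβ) j
    have heq := huniq _ hne'
      (by
        intro x hx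
        rcases Finset.mem_insert.mp (Finset.mem_coe.mp hx) with rfl | hx'
        · exact hα
        · exact hsub (Finset.mem_coe.mpr hx'))
      hvee
    have hcontra : α ∈ insert α σ := Finset.mem_insert_self α σ
    rw [heq] at hcontra
    exact hmem hcontra

lemma SN_subset [Nonempty (Fin n)] {A : Set (Fin n → ℤ)} (hgen : Generic A)
    {σ σ' : Finset (Fin n → ℤ)}
    (hσ : StronglyNeighborly A σ) (hσ' : StronglyNeighborly A σ')
    (h : vee σ ≤ vee σ') : σ ⊆ σ' := by
  intro α hα
  have hαA := hσ.2.1 hα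
  have hαle : α ≤ vee σ' := fun j => le_trans (le_vee_s8 hσ.1 hα j) (h j)
  have hnd := SN_not_dom hσ' α hαA
  rw [Dom] at hnd; push_neg at hnd
  obtain ⟨j, hj⟩ := hnd
  have hαj : α j = vee σ' j := le_antisymm (hαle j) hj
  obtain ⟨β, hβ, hβj⟩ := exists_vee_eq σ' hσ'.1 j
  have hβA := hσ'.2.1 hβ
  have hβle : β ≤ vee σ' := fun k => le_vee_s8 hσ'.1 hβ k
  have heq := hgen (vee σ') (SN_not_dom hσ') j α hαA β hβA hαle hαj hβle hβj
  exact heq ▸ hβ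

end helpers

theorem stmt8 {n : ℕ} (Λ : AddSubgroup (Fin n → ℤ)) (hΛ : IsAntichainLattice Λ)
    (A : Set (Fin n → ℤ)) (hA : LambdaFinite Λ A) (hgen : Generic A) (i : ℕ) :
    (∀ σ : Finset (Fin n → ℤ), StronglyNeighborly A σ → σ.card = i + 1 →
      ∀ l ∈ Λ, StronglyNeighborly A (σ.image (· + l)) ∧ (σ.image (· + l)).card = i + 1) ∧
    ∃ R : Finset (Finset (Fin n → ℤ)),
      (∀ τ ∈ R, StronglyNeighborly A τ ∧ τ.card = i + 1) ∧
      ∀ σ : Finset (Fin n → ℤ), StronglyNeighborly A σ → σ.card = i + 1 →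
        ∃ τ ∈ R, ∃ l ∈ Λ, σ = τ.image (· + l) := by
  classical
  obtain ⟨A₀, hsubA₀, hAeq, hdist⟩ := id hA
  have parta : ∀ σ : Finset (Fin n → ℤ), StronglyNeighborly A σ → σ.card = i + 1 →
      ∀ l ∈ Λ, StronglyNeighborly A (σ.image (· + l)) ∧ (σ.image (· + l)).card = i + 1 := by
    intro σ hσ hcard l hl
    refine ⟨SN_translate hA hσ hl, ?_⟩
    rw [Finset.card_image_of_injective _ (add_left_injective l), hcard]
  refine ⟨parta, ?_⟩
  set S : Set (Finset (Fin n → ℤ)) :=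
    {σ | StronglyNeighborly A σ ∧ σ.card = i + 1 ∧ ∃ a ∈ A₀, a ∈ σ} with hSdef
  have hfin : S.Finite := by
    rcases isEmpty_or_nonempty (Fin n) with he | hne
    · exact Set.toFinite S
    · by_contra hinf
      have hinf' : S.Infinite := hinf
      -- pigeonhole: some a ∈ A₀ has infinitely many σ containing it
      have hcover : S ⊆ ⋃ a ∈ A₀, {σ ∈ S | a ∈ σ} := by
        intro σ hσ
        obtain ⟨a, ha, haσ⟩ := hσ.2.2
        exact Set.mem_biUnion ha ⟨hσ, haσ⟩
      have : ∃ a ∈ A₀, {σ ∈ S | a ∈ σ}.Infinite := by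
        by_contra hall
        push_neg at hall
        exact hinf' ((Set.Finite.biUnion A₀.finite_toSet hall).subset hcover)
      obtain ⟨a, ha, hSa⟩ := this
      -- vee is injective on S
      have hinj : Set.InjOn vee {σ ∈ S | a ∈ σ} := by
        intro σ hσ σ' hσ' hv
        exact hσ.1.1.2.2 σ' hσ'.1.1.1 hσ'.1.1.2.1 hv.symm |>.symm
      have hTinf : (vee '' {σ ∈ S | a ∈ σ}).Infinite := Set.Infinite.image hinj hSa
      set T := vee '' {σ ∈ S | a ∈ σ} with hT
      have hTa : ∀ η ∈ T, a ≤ η := by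
        rintro η ⟨σ, hσ, rfl⟩
        exact fun j => le_vee_s8 hσ.1.1.1 hσ.2 j
      set f := Set.Infinite.natEmbedding T hTinf with hf
      obtain ⟨m, k, hmk, hle⟩ :=
        (Set.isPWO_of_wellQuasiOrderedLE
          (Set.univ : Set (Fin n → ℕ))).exists_lt (f := fun p j => ((f p : Fin n → ℤ) j - a j).toNat) (fun _ => Set.mem_univ _)
      have hmema : ∀ p : ℕ, a ≤ (f p : Fin n → ℤ) := fun p => hTa _ (f p).2
      have hlee : (f m : Fin n → ℤ) ≤ (f k : Fin n → ℤ) := by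
        intro j
        have h1 : a j ≤ (f m : Fin n → ℤ) j := hmema m j
        have h2 : a j ≤ (f k : Fin n → ℤ) j := hmema k j
        have h3 : ((f m : Fin n → ℤ) j - a j).toNat ≤ ((f k : Fin n → ℤ) j - a j).toNat := hle j
        have h4 : ((f m : Fin n → ℤ) j - a j) ≤ ((f k : Fin n → ℤ) j - a j) := by
          rw [← Int.toNat_of_nonneg (by omega : (0:ℤ) ≤ (f m : Fin n → ℤ) j - a j),
            ← Int.toNat_of_nonneg (by omega : (0:ℤ) ≤ (f k : Fin n → ℤ) j - a j)]
          exact_mod_cast h3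
        have h5 : (f m : Fin n → ℤ) j ≤ (f k : Fin n → ℤ) j := by omega
        exact h5
      obtain ⟨σ1, hσ1, hv1⟩ := (f m).2
      obtain ⟨σ2, hσ2, hv2⟩ := (f k).2
      have hsub12 : σ1 ⊆ σ2 :=
        SN_subset hgen hσ1.1.1 hσ2.1.1 (by rw [hv1, hv2]; exact hlee)
      have he12 : σ1 = σ2 :=
        Finset.eq_of_subset_of_card_le hsub12 (by rw [hσ2.1.2.1, hσ1.1.2.1])
      have hfmk : (f m : Fin n → ℤ) = (f k : Fin n → ℤ) := by rw [← hv1, ← hv2, he12]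
      have hcon : m = k := f.injective (Subtype.ext hfmk)
      omega
  refine ⟨hfin.toFinset, ?_, ?_⟩
  · intro τ hτ
    rw [Set.Finite.mem_toFinset] at hτ
    exact ⟨hτ.1, hτ.2.1⟩
  · intro σ hσ hcard
    obtain ⟨α₀, hα₀⟩ := hσ.1
    have hα₀A := hσ.2.1 hα₀
    rw [hAeq] at hα₀A
    obtain ⟨a, ha, l, hl, hx⟩ := hα₀A
    refine ⟨σ.image (· + (-l)), ?_, l, hl, ?_⟩
    · rw [Set.Finite.mem_toFinset]
      refine ⟨(parta σ hσ hcard (-l) (neg_mem hl)).1, (parta σ hσ hcard (-l) (neg_mem hl)).2,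
        a, ha, ?_⟩
      have : a = α₀ + (-l) := by rw [hx]; abel
      rw [this]
      exact Finset.mem_image_of_mem _ hα₀
    · have := image_add_add_neg σ (-l)
      simp only [neg_neg] at this
      rw [this]
end

section
/- Let Λ ⊆ ℤⁿ be an antichain lattice and A ⊆ ℤⁿ a generic Λ-finite set. Then for every α ∈ A, the set of neighbors of α, namely {β ∈ A : β ≠ α and {α, β} is neighborly in A}, is finite. -/
lemma vee_pair {n : ℕ} (α β : Fin n → ℤ) (i : Fin n) :
    vee {α, β} i = max (α i) (β i) := by
  unfold vee
  rw [Finset.image_insert, Finset.image_singleton, Finset.max_insert, Finset.max_singleton, ← WithBot.coe_max, WithBot.unbotD_coe]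

theorem stmt9 {n : ℕ} (Λ : AddSubgroup (Fin n → ℤ)) (hΛ : IsAntichainLattice Λ)
    (A : Set (Fin n → ℤ)) (hA : LambdaFinite Λ A) (hgen : Generic A) :
    ∀ α ∈ A, {β : Fin n → ℤ | β ∈ A ∧ β ≠ α ∧ Neighborly A {α, β}}.Finite := by
  intro α hα
  -- every neighbor differs from α in every coordinate
  have hdiff : ∀ β ∈ A, β ≠ α → Neighborly A {α, β} → ∀ i, α i ≠ β i := by
    intro β hβ hβα hN i heq
    have hle : ∀ γ ∈ A, ¬ Dom γ (vee {α, β}) := hN.2.2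
    have hαle : α ≤ vee {α, β} := fun j => by rw [vee_pair]; exact le_max_left _ _
    have hβle : β ≤ vee {α, β} := fun j => by rw [vee_pair]; exact le_max_right _ _
    have hαi : α i = vee {α, β} i := by rw [vee_pair, ← heq, max_self]
    have hβi : β i = vee {α, β} i := by rw [vee_pair, ← heq, max_self]
    exact hβα (hgen (vee {α, β}) hle i α hα β hβ hαle hαi hβle hβi).symm
  set N : Set (Fin n → ℤ) := {β | β ∈ A ∧ β ≠ α ∧ Neighborly A {α, β}} with hNdef
  have hcover : N ⊆ ⋃ S : Finset (Fin n),
      {β ∈ N | ∀ i, i ∈ S ↔ α i < β i} := by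
    intro β hβ
    exact Set.mem_iUnion.2 ⟨Finset.univ.filter (fun i => α i < β i),
      hβ, fun i => by simp⟩
  refine Set.Finite.subset (Set.finite_iUnion ?_) hcover
  intro S
  by_contra hinf
  have hinf' : {β ∈ N | ∀ i, i ∈ S ↔ α i < β i}.Infinite := hinf
  let e := hinf'.natEmbedding
  have hmem : ∀ k : ℕ, (e k : Fin n → ℤ) ∈ N ∧ ∀ i, i ∈ S ↔ α i < (e k : Fin n → ℤ) i :=
    fun k => (e k).2
  let f : ℕ → (Fin n → ℕ) := fun k i =>
    (if i ∈ S then (e k : Fin n → ℤ) i - α i else α i - (e k : Fin n → ℤ) i).toNat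
  have hpwo : (Set.univ : Set (Fin n → ℕ)).IsPWO :=
    Set.isPWO_of_wellQuasiOrderedLE _
  obtain ⟨m, k, hmk, hfle⟩ := hpwo.exists_lt (f := f) (fun _ => Set.mem_univ _)
  set β : Fin n → ℤ := (e m : Fin n → ℤ) with hβdef
  set γ : Fin n → ℤ := (e k : Fin n → ℤ) with hγdef
  have hβN := (hmem m).1
  have hγN := (hmem k).1
  have hβS := (hmem m).2
  have hγS := (hmem k).2
  have hβA : β ∈ A := hβN.1
  have hγA : γ ∈ A := hγN.1
  have hβγ : β ≠ γ := by
    intro h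
    have : e m = e k := Subtype.ext h
    exact absurd (e.injective this) (Nat.ne_of_lt hmk)
  -- coordinate facts
  have hβlt : ∀ i, i ∉ S → β i < α i := by
    intro i hi
    have h1 : ¬ α i < β i := fun h => hi ((hβS i).2 h)
    have h2 : α i ≠ β i := hdiff β hβA hβN.2.1 hβN.2.2 i
    omega
  have hγlt : ∀ i, i ∉ S → γ i < α i := by
    intro i hi
    have h1 : ¬ α i < γ i := fun h => hi ((hγS i).2 h)
    have h2 : α i ≠ γ i := hdiff γ hγA hγN.2.1 hγN.2.2 i
    omega
  have hleS : ∀ i, i ∈ S → β i ≤ γ i := by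
    intro i hi
    have h1 := hfle i
    have h2 : α i < β i := (hβS i).1 hi
    have h3 : α i < γ i := (hγS i).1 hi
    simp only [f, if_pos hi] at h1
    have e1 : (e m : Fin n → ℤ) i = β i := rfl
    have e2 : (e k : Fin n → ℤ) i = γ i := rfl
    omega
  have hveeγ : ∀ i, vee {α, γ} i = max (α i) (γ i) := vee_pair α γ
  have hβlevee : β ≤ vee {α, γ} := by
    intro i
    rw [hveeγ i]
    by_cases hi : i ∈ S
    · exact le_trans (hleS i hi) (le_max_right _ _)
    · exact le_trans (hβlt i hi).le (le_max_left _ _)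
  by_cases hex : ∃ i ∈ S, β i = γ i
  · obtain ⟨i, hiS, hieq⟩ := hex
    have hnd : ∀ δ ∈ A, ¬ Dom δ (vee {α, γ}) := hγN.2.2.2.2
    have hγi : γ i = vee {α, γ} i := by
      rw [hveeγ i, max_eq_right ((hγS i).1 hiS).le]
    have hβi : β i = vee {α, γ} i := by rw [← hγi]; exact hieq
    have hγlevee : γ ≤ vee {α, γ} := fun j => by
      rw [hveeγ j]; exact le_max_right _ _
    exact hβγ (hgen (vee {α, γ}) hnd i β hβA γ hγA hβlevee hβi hγlevee hγi)
  · push_neg at hex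
    have hdom : Dom β (vee {α, γ}) := by
      intro i
      rw [hveeγ i]
      by_cases hi : i ∈ S
      · exact lt_of_lt_of_le (lt_of_le_of_ne (hleS i hi) (hex i hi)) (le_max_right _ _)
      · exact lt_of_lt_of_le (hβlt i hi) (le_max_left _ _)
    exact hγN.2.2.2.2 β hβA hdom
end

section
/- Let Λ ⊆ ℤⁿ be an antichain lattice and A ⊆ ℤⁿ a generic Λ-finite set. Then there exists T ∈ ℝ (for instance any T > (n+1)!) such that for all real t, t′ ≥ T and every nonempty finite σ ⊆ A: conv(E_t(σ)) is an exposed face of P_t(A) if and only if conv(E_{t′}(σ)) is an exposed face of P_{t′}(A). In other words, the hull complex hull_t(A) is independent of t for t ≥ T. -/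
open scoped Pointwise

/-- `E_t(α) = (t^{α₁}, …, t^{αₙ}) ∈ ℝⁿ`. -/
noncomputable def Et {n : ℕ} (t : ℝ) (α : Fin n → ℤ) : Fin n → ℝ := fun i => t ^ (α i)

/-- The polyhedron `P_t(A) = conv(E_t(A)) + [0,∞)ⁿ`. -/
noncomputable def Pt {n : ℕ} (t : ℝ) (A : Set (Fin n → ℤ)) : Set (Fin n → ℝ) :=
  convexHull ℝ (Et t '' A) + {x : Fin n → ℝ | ∀ i, 0 ≤ x i}

/-- `F` is an exposed face of `C`: `F` is the set of points of `C` maximizing some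
linear functional `l` over `C`. -/
def IsExposedFace {n : ℕ} (C F : Set (Fin n → ℝ)) : Prop :=
  ∃ l : (Fin n → ℝ) →ₗ[ℝ] ℝ, F = {x ∈ C | ∀ y ∈ C, l y ≤ l x}


section HullAux

lemma vee_spec {n : ℕ} {σ : Finset (Fin n → ℤ)} (hσ : σ.Nonempty) (i : Fin n) :
    (∃ β ∈ σ, β i = vee σ i) ∧ ∀ β ∈ σ, β i ≤ vee σ i := by
  have hne : (σ.image fun α => α i).Nonempty := hσ.image _
  have hv : vee σ i = (σ.image fun α => α i).max' hne := by
    simp only [vee, ← Finset.coe_max' hne, WithBot.unbotD_coe]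
  constructor
  · obtain ⟨β, hβ, hβi⟩ := Finset.mem_image.mp (Finset.max'_mem _ hne)
    exact ⟨β, hβ, by rw [hv, hβi]⟩
  · intro β hβ
    rw [hv]
    exact Finset.le_max' (σ.image fun α => α i) (β i) (Finset.mem_image_of_mem _ hβ)

lemma add_mem_Pt {n : ℕ} {t : ℝ} {A : Set (Fin n → ℤ)} {x q : Fin n → ℝ}
    (hx : x ∈ convexHull ℝ (Et t '' A)) (hq : ∀ i, 0 ≤ q i) : x + q ∈ Pt t A :=
  Set.add_mem_add hx (by exact hq)

lemma mem_Pt_of_mem {n : ℕ} {t : ℝ} {A : Set (Fin n → ℤ)} {α : Fin n → ℤ}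
    (hα : α ∈ A) : Et t α ∈ Pt t A := by
  have := add_mem_Pt (t := t) (A := A) (q := 0)
    (subset_convexHull ℝ _ (Set.mem_image_of_mem _ hα)) (fun i => le_refl 0)
  simpa using this

lemma convHull_subset_Pt {n : ℕ} {t : ℝ} {A : Set (Fin n → ℤ)} {σ : Finset (Fin n → ℤ)}
    (hσA : ↑σ ⊆ A) : convexHull ℝ (Et t '' ↑σ) ⊆ Pt t A := by
  intro x hx
  have hx' : x ∈ convexHull ℝ (Et t '' A) :=
    convexHull_mono (Set.image_mono hσA) hx
  simpa using add_mem_Pt hx' (q := 0) (fun i => le_refl 0)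

lemma exposed_of_neighborly {n : ℕ} {t : ℝ} (ht : (4 * n + 4 : ℝ) ≤ t)
    {A : Set (Fin n → ℤ)} (hgen : Generic A) {σ : Finset (Fin n → ℤ)}
    (hnb : Neighborly A σ) :
    IsExposedFace (Pt t A) (convexHull ℝ (Et t '' (↑σ : Set (Fin n → ℤ)))) := by
  classical
  obtain ⟨hσ, hσA, hnd⟩ := hnb
  have hn0 : (0:ℝ) ≤ (n:ℝ) := Nat.cast_nonneg n
  have ht1 : (1:ℝ) < t := by linarith
  have ht0 : (0:ℝ) < t := lt_trans one_pos ht1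
  have htn : (n:ℝ) < t := by linarith
  set η := vee σ with hη
  have hmax : ∀ i, ∃ β ∈ σ, β i = η i := fun i => (vee_spec hσ i).1
  have hle : ∀ β ∈ σ, ∀ i, β i ≤ η i := fun β hβ i => (vee_spec hσ i).2 β hβ
  choose φ hφσ hφi using hmax
  have huniq := hgen η hnd
  have hφle : ∀ i j, φ i j ≤ η j := fun i j => hle _ (hφσ i) j
  have huniq' : ∀ i, ∀ α ∈ A, (∀ j, α j ≤ η j) → α i = η i → α = φ i := by
    intro i α hαA hαle hαi
    exact huniq i α hαA (φ i) (hσA (hφσ i)) hαle hαi (hφle i) (hφi i)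
  have hmemσ : ∀ α ∈ A, (∀ j, α j ≤ η j) → α ∈ σ := by
    intro α hαA hαle
    have hd := hnd α hαA
    rw [Dom] at hd; push_neg at hd
    obtain ⟨i, hi⟩ := hd
    rw [huniq' i α hαA hαle (le_antisymm (hαle i) hi)]
    exact hφσ i
  have hsuppne : ∀ β ∈ σ, ∃ i, φ i = β := by
    intro β hβ
    have hd := hnd β (hσA hβ)
    rw [Dom] at hd; push_neg at hd
    obtain ⟨i, hi⟩ := hd
    exact ⟨i, (huniq' i β (hσA hβ) (hle β hβ) (le_antisymm (hle β hβ i) hi)).symm⟩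
  have hoff : ∀ β ∈ σ, ∀ i, φ i ≠ β → β i ≤ η i - 1 := by
    intro β hβ i hne
    rcases lt_or_eq_of_le (hle β hβ i) with h | h
    · omega
    · exact absurd (huniq' i β (hσA hβ) (hle β hβ) h).symm hne
  -- the subtype and the linear system
  haveI : Nonempty {x // x ∈ σ} := ⟨⟨hσ.choose, hσ.choose_spec⟩⟩
  set f : ({x // x ∈ σ} → ℝ) →ₗ[ℝ] ({x // x ∈ σ} → ℝ) :=
    { toFun := fun c β => ∑ i, c ⟨φ i, hφσ i⟩ * t ^ ((β : Fin n → ℤ) i - η i),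
      map_add' := by
        intro c d; funext β
        simp [add_mul, Finset.sum_add_distrib]
      map_smul' := by
        intro r c; funext β
        simp [Finset.mul_sum, mul_assoc] } with hf
  have hf_apply : ∀ (c : {x // x ∈ σ} → ℝ) (β : {x // x ∈ σ}),
      f c β = ∑ i, c ⟨φ i, hφσ i⟩ * t ^ ((β : Fin n → ℤ) i - η i) := fun c β => rfl
  set K : {x // x ∈ σ} → Finset (Fin n) :=
    fun β => Finset.univ.filter (fun i => φ i = (β : Fin n → ℤ)) with hK
  set R : ({x // x ∈ σ} → ℝ) → {x // x ∈ σ} → ℝ :=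
    fun c β => ∑ i ∈ Finset.univ.filter (fun i => ¬ φ i = (β : Fin n → ℤ)),
      c ⟨φ i, hφσ i⟩ * t ^ ((β : Fin n → ℤ) i - η i) with hR
  have hk1 : ∀ β : {x // x ∈ σ}, (1:ℝ) ≤ ((K β).card : ℝ) := by
    intro β
    obtain ⟨i, hi⟩ := hsuppne (β : Fin n → ℤ) β.2
    have : 1 ≤ (K β).card :=
      Finset.card_pos.mpr ⟨i, Finset.mem_filter.mpr ⟨Finset.mem_univ _, hi⟩⟩
    exact_mod_cast this
  have hkn : ∀ β : {x // x ∈ σ}, ((K β).card : ℝ) ≤ (n:ℝ) := by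
    intro β
    have h1 : (K β).card ≤ Finset.univ.card := Finset.card_filter_le _ _
    have h2 : (Finset.univ : Finset (Fin n)).card = n := by simp
    exact_mod_cast h1.trans_eq h2
  have hdecomp : ∀ (c : {x // x ∈ σ} → ℝ) (β : {x // x ∈ σ}),
      f c β = ((K β).card : ℝ) * c β + R c β := by
    intro c β
    rw [hf_apply, ← Finset.sum_filter_add_sum_filter_not Finset.univ
      (fun i => φ i = (β : Fin n → ℤ))]
    congr 1
    have hterm : ∀ i ∈ Finset.univ.filter (fun i => φ i = (β : Fin n → ℤ)),
        c ⟨φ i, hφσ i⟩ * t ^ ((β : Fin n → ℤ) i - η i) = c β := by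
      intro i hi
      have hφiβ : φ i = (β : Fin n → ℤ) := (Finset.mem_filter.mp hi).2
      have he : (β : Fin n → ℤ) i = η i := by rw [← hφiβ]; exact hφi i
      rw [he, sub_self, zpow_zero, mul_one]
      exact congrArg c (Subtype.ext hφiβ)
    rw [Finset.sum_congr rfl hterm, Finset.sum_const, nsmul_eq_mul]
  have hRbound : ∀ (c : {x // x ∈ σ} → ℝ) (μ : ℝ), (∀ γ, |c γ| ≤ μ) →
      ∀ β : {x // x ∈ σ}, |R c β| ≤ n * μ / t := by
    intro c μ hμ β
    have hμ0 : 0 ≤ μ := le_trans (abs_nonneg _) (hμ (Classical.arbitrary _))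
    have hterm : ∀ i ∈ Finset.univ.filter (fun i => ¬ φ i = (β : Fin n → ℤ)),
        |c ⟨φ i, hφσ i⟩ * t ^ ((β : Fin n → ℤ) i - η i)| ≤ μ / t := by
      intro i hi
      have hne : φ i ≠ (β : Fin n → ℤ) := (Finset.mem_filter.mp hi).2
      have he : (β : Fin n → ℤ) i - η i ≤ -1 := by
        have := hoff (β : Fin n → ℤ) β.2 i hne; omega
      have h2 : (t:ℝ) ^ ((β : Fin n → ℤ) i - η i) ≤ t ^ (-1 : ℤ) :=
        zpow_le_zpow_right₀ ht1.le he
      have h3 : (t:ℝ) ^ (-1:ℤ) = 1 / t := by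
        rw [zpow_neg, zpow_one, one_div]
      rw [abs_mul, abs_of_pos (zpow_pos ht0 _)]
      calc |c ⟨φ i, hφσ i⟩| * t ^ ((β : Fin n → ℤ) i - η i)
          ≤ μ * (1 / t) := mul_le_mul (hμ _) (h3 ▸ h2) (zpow_pos ht0 _).le hμ0
        _ = μ / t := by ring
    have hcard : ((Finset.univ.filter (fun i => ¬ φ i = (β : Fin n → ℤ))).card : ℝ) ≤ (n:ℝ) := by
      have h1 := Finset.card_filter_le Finset.univ (fun i => ¬ φ i = (β : Fin n → ℤ))
      have h2 : (Finset.univ : Finset (Fin n)).card = n := by simp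
      exact_mod_cast h1.trans_eq h2
    calc |R c β| ≤ ∑ i ∈ Finset.univ.filter (fun i => ¬ φ i = (β : Fin n → ℤ)),
            |c ⟨φ i, hφσ i⟩ * t ^ ((β : Fin n → ℤ) i - η i)| :=
          Finset.abs_sum_le_sum_abs _ _
      _ ≤ ∑ _i ∈ Finset.univ.filter (fun i => ¬ φ i = (β : Fin n → ℤ)), μ / t :=
          Finset.sum_le_sum hterm
      _ = ((Finset.univ.filter (fun i => ¬ φ i = (β : Fin n → ℤ))).card : ℝ) * (μ / t) := by
          rw [Finset.sum_const, nsmul_eq_mul]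
      _ ≤ (n:ℝ) * (μ / t) := mul_le_mul_of_nonneg_right hcard (by positivity)
      _ = n * μ / t := by ring
  -- injectivity
  have hinj : Function.Injective f := by
    intro c d hcd
    have h0 : f (c - d) = 0 := by rw [map_sub, hcd, sub_self]
    set e : {x // x ∈ σ} → ℝ := c - d with he
    obtain ⟨β₀, hβ₀max⟩ := Finite.exists_max (fun γ : {x // x ∈ σ} => |e γ|)
    have hz : ((K β₀).card : ℝ) * e β₀ + R e β₀ = 0 := by
      rw [← hdecomp e β₀, h0]; rfl
    have hRb := hRbound e (|e β₀|) hβ₀max β₀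
    have habs : ((K β₀).card : ℝ) * |e β₀| = |R e β₀| := by
      have h1 : ((K β₀).card : ℝ) * e β₀ = -(R e β₀) := by linarith
      calc ((K β₀).card : ℝ) * |e β₀| = |((K β₀).card : ℝ) * e β₀| := by
            rw [abs_mul, abs_of_nonneg (Nat.cast_nonneg _ : (0:ℝ) ≤ ((K β₀).card : ℝ))]
        _ = |R e β₀| := by rw [h1, abs_neg]
    have hmain : |e β₀| * t ≤ (n:ℝ) * |e β₀| := by
      have h1 : |e β₀| ≤ ((K β₀).card : ℝ) * |e β₀| := by
        nlinarith [abs_nonneg (e β₀), hk1 β₀]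
      have h2 : |e β₀| ≤ n * |e β₀| / t := by
        calc |e β₀| ≤ ((K β₀).card : ℝ) * |e β₀| := h1
          _ = |R e β₀| := habs
          _ ≤ n * |e β₀| / t := hRb
      calc |e β₀| * t ≤ (n * |e β₀| / t) * t := mul_le_mul_of_nonneg_right h2 ht0.le
        _ = n * |e β₀| := by field_simp
    have hμ0 : |e β₀| ≤ 0 := by
      by_contra hpos
      push_neg at hpos
      have := mul_lt_mul_of_pos_left htn hpos
      nlinarith
    have hezero : e = 0 := by
      funext γ
      have := le_trans (hβ₀max γ) hμ0
      simpa using abs_eq_zero.mp (le_antisymm this (abs_nonneg _))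
    have : c - d = 0 := hezero
    exact sub_eq_zero.mp this
  obtain ⟨c, hc⟩ := (LinearMap.injective_iff_surjective).mp hinj (fun _ => (1:ℝ))
  have hfc1 : ∀ β : {x // x ∈ σ}, f c β = 1 := fun β => congrFun hc β
  -- bounds on c
  obtain ⟨β₁, hβ₁max⟩ := Finite.exists_max (fun γ : {x // x ∈ σ} => |c γ|)
  set μ : ℝ := |c β₁| with hμdef
  have hμnn : 0 ≤ μ := abs_nonneg _
  have hnt4 : (n:ℝ) * μ / t ≤ μ / 4 := by
    rw [div_le_div_iff₀ ht0 (by norm_num : (0:ℝ) < 4)]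
    nlinarith
  have hμle : μ ≤ 4/3 := by
    have hd := hdecomp c β₁
    rw [hfc1 β₁] at hd
    have hRb := hRbound c μ hβ₁max β₁
    have h1 : μ ≤ ((K β₁).card : ℝ) * μ := by nlinarith [hk1 β₁]
    have h2 : ((K β₁).card : ℝ) * μ = |((K β₁).card : ℝ) * c β₁| := by
      rw [abs_mul, abs_of_nonneg (Nat.cast_nonneg _ : (0:ℝ) ≤ ((K β₁).card : ℝ))]
    have h3 : |((K β₁).card : ℝ) * c β₁| ≤ 1 + |R c β₁| := by
      have : ((K β₁).card : ℝ) * c β₁ = 1 - R c β₁ := by linarith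
      rw [this]
      calc |1 - R c β₁| ≤ |(1:ℝ)| + |R c β₁| := abs_sub _ _
        _ = 1 + |R c β₁| := by rw [abs_one]
    have h4 : μ ≤ 1 + n * μ / t := by
      calc μ ≤ ((K β₁).card : ℝ) * μ := h1
        _ = |((K β₁).card : ℝ) * c β₁| := h2
        _ ≤ 1 + |R c β₁| := h3
        _ ≤ 1 + n * μ / t := by linarith
    linarith [hnt4]
  have hn1 : (1:ℝ) ≤ (n:ℝ) := le_trans (hk1 β₁) (hkn β₁)
  have hclow : ∀ β : {x // x ∈ σ}, 2 / (3 * (n:ℝ)) ≤ c β ∧ 0 < c β := by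
    intro β
    have hd := hdecomp c β
    rw [hfc1 β] at hd
    have hRb := hRbound c μ hβ₁max β
    have hR3 : |R c β| ≤ 1/3 := by
      calc |R c β| ≤ n * μ / t := hRb
        _ ≤ μ / 4 := hnt4
        _ ≤ (4/3) / 4 := by linarith
        _ = 1/3 := by norm_num
    have h23 : 2/3 ≤ ((K β).card : ℝ) * c β := by
      have := abs_le.mp hR3
      linarith
    have hcpos : 0 < c β := by nlinarith [hk1 β, hkn β]
    constructor
    · rw [div_le_iff₀ (by nlinarith : (0:ℝ) < 3 * (n:ℝ))]
      nlinarith [mul_le_mul_of_nonneg_left (hkn β) hcpos.le]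
    · exact hcpos
  -- the weight vector
  set w : Fin n → ℝ := fun i => c ⟨φ i, hφσ i⟩ * t ^ (-(η i)) with hwdef
  have hw0 : ∀ i, 0 < w i := fun i =>
    mul_pos (hclow ⟨φ i, hφσ i⟩).2 (zpow_pos ht0 _)
  have hW : ∀ α : Fin n → ℤ, ∑ i, w i * t ^ (α i)
      = ∑ i, c ⟨φ i, hφσ i⟩ * t ^ (α i - η i) := by
    intro α
    refine Finset.sum_congr rfl fun i _ => ?_
    rw [hwdef]
    rw [mul_assoc, ← zpow_add₀ (ne_of_gt ht0), ← sub_eq_neg_add]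
  have hWσ : ∀ β ∈ σ, ∑ i, w i * t ^ (β i) = 1 := by
    intro β hβ
    rw [hW]
    exact hfc1 ⟨β, hβ⟩
  have hWgt : ∀ α ∈ A, α ∉ σ → 1 < ∑ i, w i * t ^ (α i) := by
    intro α hα hασ
    have hex : ∃ i₀, η i₀ < α i₀ := by
      by_contra hcon
      push_neg at hcon
      exact hασ (hmemσ α hα hcon)
    obtain ⟨i₀, hi₀⟩ := hex
    rw [hW]
    have hnonneg : ∀ i ∈ Finset.univ, 0 ≤ c ⟨φ i, hφσ i⟩ * t ^ (α i - η i) :=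
      fun i _ => mul_nonneg (hclow ⟨φ i, hφσ i⟩).2.le (zpow_pos ht0 _).le
    have hsingle := Finset.single_le_sum hnonneg (Finset.mem_univ i₀)
    have hexp : (1:ℤ) ≤ α i₀ - η i₀ := by omega
    have htexp : t ≤ t ^ (α i₀ - η i₀) := by
      calc t = t ^ (1:ℤ) := (zpow_one t).symm
        _ ≤ t ^ (α i₀ - η i₀) := zpow_le_zpow_right₀ ht1.le hexp
    have hterm : 2 / (3 * (n:ℝ)) * t ≤ c ⟨φ i₀, hφσ i₀⟩ * t ^ (α i₀ - η i₀) :=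
      mul_le_mul (hclow _).1 htexp ht0.le (hclow _).2.le
    have h2t : (1:ℝ) < 2 / (3 * (n:ℝ)) * t := by
      rw [div_mul_eq_mul_div, lt_div_iff₀ (by nlinarith : (0:ℝ) < 3 * (n:ℝ))]
      nlinarith
    calc (1:ℝ) < 2 / (3 * (n:ℝ)) * t := h2t
      _ ≤ c ⟨φ i₀, hφσ i₀⟩ * t ^ (α i₀ - η i₀) := hterm
      _ ≤ ∑ i, c ⟨φ i, hφσ i⟩ * t ^ (α i - η i) := hsingle
  have hWge : ∀ α ∈ A, 1 ≤ ∑ i, w i * t ^ (α i) := by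
    intro α hα
    by_cases hασ : α ∈ σ
    · exact le_of_eq (hWσ α hασ).symm
    · exact (hWgt α hα hασ).le
  -- the exposing functional
  refine ⟨{ toFun := fun x => -∑ i, w i * x i,
            map_add' := by
              intro x y
              simp [Pi.add_apply, mul_add, Finset.sum_add_distrib]
              ring
            map_smul' := by
              intro r x
              simp [Pi.smul_apply, smul_eq_mul, Finset.mul_sum, mul_left_comm] }, ?_⟩
  have hl_apply : ∀ z : Fin n → ℝ,
      ({ toFun := fun x => -∑ i, w i * x i,
         map_add' := by
           intro x y
           simp [Pi.add_apply, mul_add, Finset.sum_add_distrib]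
           ring
         map_smul' := by
           intro r x
           simp [Pi.smul_apply, smul_eq_mul, Finset.mul_sum, mul_left_comm] }
        : (Fin n → ℝ) →ₗ[ℝ] ℝ) z = -∑ i, w i * z i := fun z => rfl
  have hglin : IsLinearMap ℝ (fun x : Fin n → ℝ => ∑ i, w i * x i) := by
    constructor
    · intro x y
      simp [Pi.add_apply, mul_add, Finset.sum_add_distrib]
    · intro r x
      simp [Pi.smul_apply, smul_eq_mul, Finset.mul_sum, mul_left_comm]
  have hP1 : ∀ p ∈ convexHull ℝ (Et t '' A), 1 ≤ ∑ i, w i * p i := by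
    intro p hp
    refine convexHull_min ?_ (convex_halfSpace_ge hglin 1) hp
    rintro x ⟨α, hα, rfl⟩
    exact hWge α hα
  have hP2 : ∀ x ∈ convexHull ℝ (Et t '' (↑σ : Set (Fin n → ℤ))), ∑ i, w i * x i = 1 := by
    intro x hx
    refine convexHull_min ?_ (convex_hyperplane hglin 1) hx
    rintro y ⟨β, hβ, rfl⟩
    exact hWσ β hβ
  apply Set.Subset.antisymm
  · intro x hx
    refine ⟨convHull_subset_Pt hσA hx, ?_⟩
    intro y hy
    obtain ⟨p, hp, q, hq, rfl⟩ := Set.mem_add.mp hy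
    rw [hl_apply, hl_apply]
    have h1 : 1 ≤ ∑ i, w i * p i := hP1 p hp
    have h2 : 0 ≤ ∑ i, w i * q i :=
      Finset.sum_nonneg fun i _ => mul_nonneg (hw0 i).le (hq i)
    have h3 : ∑ i, w i * x i = 1 := hP2 x hx
    have hsplit : ∑ i, w i * (p + q) i = ∑ i, w i * p i + ∑ i, w i * q i := by
      simp [Pi.add_apply, mul_add, Finset.sum_add_distrib]
    rw [hsplit, h3]
    linarith
  · rintro x ⟨hxPt, hxmax⟩
    obtain ⟨p, hp, q, hq, rfl⟩ := Set.mem_add.mp hxPt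
    obtain ⟨β₀, hβ₀⟩ := hσ
    have hmax' := hxmax _ (mem_Pt_of_mem (t := t) (hσA hβ₀))
    rw [hl_apply, hl_apply] at hmax'
    have hEβ : ∑ i, w i * (Et t β₀) i = 1 := hWσ β₀ hβ₀
    have hsplit : ∑ i, w i * (p + q) i = ∑ i, w i * p i + ∑ i, w i * q i := by
      simp [Pi.add_apply, mul_add, Finset.sum_add_distrib]
    have hsum_le : ∑ i, w i * p i + ∑ i, w i * q i ≤ 1 := by
      rw [← hsplit, ← hEβ]
      linarith
    have h1 : 1 ≤ ∑ i, w i * p i := hP1 p hp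
    have h2 : 0 ≤ ∑ i, w i * q i :=
      Finset.sum_nonneg fun i _ => mul_nonneg (hw0 i).le (hq i)
    have hqsum : ∑ i, w i * q i = 0 := by linarith
    have hq0 : q = 0 := by
      funext i
      have hz := (Finset.sum_eq_zero_iff_of_nonneg
        (fun i _ => mul_nonneg (hw0 i).le (hq i))).mp hqsum i (Finset.mem_univ i)
      have : q i = 0 := by
        rcases mul_eq_zero.mp hz with h | h
        · exact absurd h (ne_of_gt (hw0 i))
        · exact h
      simpa using this
    rw [hq0, add_zero]
    have hp1 : ∑ i, w i * p i = 1 := by linarith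
    -- extract a convex combination
    rw [_root_.convexHull_eq] at hp
    obtain ⟨ι, s, lam, z, hlam0, hlam1, hz, hcm⟩ := hp
    have hpsum : p = ∑ j ∈ s, lam j • z j := by
      rw [← hcm, Finset.centerMass_eq_of_sum_1 _ _ hlam1]
    have hgz : ∀ j ∈ s, 1 ≤ ∑ i, w i * z j i := fun j hj =>
      hP1 _ (subset_convexHull ℝ _ (hz j hj))
    have hgp : ∑ j ∈ s, lam j * (∑ i, w i * z j i) = 1 := by
      rw [← hp1, hpsum]
      have hswap : ∑ i, w i * (∑ j ∈ s, lam j • z j) i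
          = ∑ j ∈ s, lam j * ∑ i, w i * z j i := by
        simp only [Finset.sum_apply, Pi.smul_apply, smul_eq_mul, Finset.mul_sum]
        rw [Finset.sum_comm]
        exact Finset.sum_congr rfl fun j _ => Finset.sum_congr rfl fun i _ => by ring
      rw [hswap]
    have hsum0 : ∑ j ∈ s, lam j * ((∑ i, w i * z j i) - 1) = 0 := by
      have hexp : ∑ j ∈ s, lam j * ((∑ i, w i * z j i) - 1)
          = (∑ j ∈ s, lam j * (∑ i, w i * z j i)) - ∑ j ∈ s, lam j := by
        rw [← Finset.sum_sub_distrib]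
        exact Finset.sum_congr rfl fun j _ => by ring
      rw [hexp, hgp, hlam1, sub_self]
    have hkey0 : ∀ j ∈ s, lam j ≠ 0 → (∑ i, w i * z j i) = 1 := by
      intro j hj hjne
      have hterm0 := (Finset.sum_eq_zero_iff_of_nonneg
        (fun j hj => mul_nonneg (hlam0 j hj) (by linarith [hgz j hj]))).mp hsum0 j hj
      rcases mul_eq_zero.mp hterm0 with h | h
      · exact absurd h hjne
      · linarith [hgz j hj]
    have hzσ : ∀ j ∈ s, lam j ≠ 0 → z j ∈ Et t '' (↑σ : Set (Fin n → ℤ)) := by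
      intro j hj hjne
      obtain ⟨α, hαA, hzj⟩ := hz j hj
      have hval : ∑ i, w i * z j i = 1 := hkey0 j hj hjne
      have hασ : α ∈ σ := by
        by_contra hασ
        have hgt := hWgt α hαA hασ
        rw [← hzj] at hval
        have : ∑ i, w i * Et t α i = ∑ i, w i * t ^ (α i) := rfl
        rw [this] at hval
        linarith
      exact ⟨α, hασ, hzj⟩
    rw [← hcm, ← Finset.centerMass_filter_ne_zero (w := lam)]
    apply Finset.centerMass_mem_convexHull
    · intro j hj
      exact hlam0 j (Finset.mem_filter.mp hj).1
    · rw [Finset.sum_filter_ne_zero, hlam1]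
      exact one_pos
    · intro j hj
      obtain ⟨hjs, hjne⟩ := Finset.mem_filter.mp hj
      exact hzσ j hjs hjne

lemma neighborly_of_exposed {n : ℕ} (hn : 0 < n) {t : ℝ} (ht1 : 1 < t) (htn : (n : ℝ) < t)
    {A : Set (Fin n → ℤ)} {σ : Finset (Fin n → ℤ)} (hσ : σ.Nonempty) (hσA : ↑σ ⊆ A)
    (hexp : IsExposedFace (Pt t A) (convexHull ℝ (Et t '' (↑σ : Set (Fin n → ℤ))))) :
    Neighborly A σ := by
  have ht0 : (0:ℝ) < t := lt_trans one_pos ht1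
  obtain ⟨l, hl⟩ := hexp
  obtain ⟨β₀, hβ₀⟩ := hσ.exists_mem
  have hmemF : ∀ β ∈ σ, Et t β ∈ {x ∈ Pt t A | ∀ y ∈ Pt t A, l y ≤ l x} := by
    intro β hβ
    rw [← hl]
    exact subset_convexHull ℝ _ (Set.mem_image_of_mem _ hβ)
  have hβ₀F := hmemF β₀ hβ₀
  -- the weight vector
  set w : Fin n → ℝ := fun i => -(l (Pi.single i 1)) with hw
  have hsingle : ∀ i : Fin n, (fun j => if i = j then (1:ℝ) else 0) = Pi.single i 1 := by
    intro i; funext j; simp [Pi.single_apply, eq_comm]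
  have hkey : ∀ x : Fin n → ℝ, l x = -∑ i, w i * x i := by
    intro x
    rw [LinearMap.pi_apply_eq_sum_univ l x, ← Finset.sum_neg_distrib]
    refine Finset.sum_congr rfl fun i _ => ?_
    rw [hsingle i]
    simp [hw, smul_eq_mul]
    ring
  -- nonnegativity of w
  have hw0 : ∀ i, 0 ≤ w i := by
    intro i
    have hy : Et t β₀ + Pi.single i 1 ∈ Pt t A := by
      refine add_mem_Pt (subset_convexHull ℝ _ (Set.mem_image_of_mem _ (hσA hβ₀))) ?_
      intro j
      rcases eq_or_ne j i with rfl | hne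
      · simp
      · simp [Pi.single_apply, hne]
    have := hβ₀F.2 _ hy
    rw [map_add] at this
    have hli : l (Pi.single i 1) ≤ 0 := by linarith
    simpa [hw] using hli
  -- some coordinate is positive
  have hwne : ∃ i, 0 < w i := by
    by_contra hcon
    push_neg at hcon
    have hwz : ∀ i, w i = 0 := fun i => le_antisymm (hcon i) (hw0 i)
    have hl0 : ∀ x : Fin n → ℝ, l x = 0 := by
      intro x; rw [hkey]; simp [hwz]
    have hPt_sub : Pt t A ⊆ convexHull ℝ (Et t '' (↑σ : Set (Fin n → ℤ))) := by
      intro x hx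
      rw [hl]
      exact ⟨hx, fun y hy => by simp [hl0]⟩
    -- unbounded direction contradiction
    set i₀ : Fin n := ⟨0, hn⟩
    have hBne : (σ.image fun β => (t:ℝ) ^ (β i₀)).Nonempty := Finset.Nonempty.image ⟨β₀, hβ₀⟩ _
    set B : ℝ := (σ.image fun β => (t:ℝ) ^ (β i₀)).max' hBne with hBdef
    have hbd : ∀ x ∈ convexHull ℝ (Et t '' (↑σ : Set (Fin n → ℤ))), x i₀ ≤ B := by
      have hconv : Convex ℝ {x : Fin n → ℝ | x i₀ ≤ B} :=
        convex_halfSpace_le (⟨fun a b => rfl, fun c a => rfl⟩ : IsLinearMap ℝ fun x : Fin n → ℝ => x i₀) B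
      intro x hx
      refine convexHull_min ?_ hconv hx
      rintro y ⟨β, hβ, rfl⟩
      show (t:ℝ) ^ (β i₀) ≤ B
      exact Finset.le_max' (σ.image fun β => (t:ℝ) ^ (β i₀)) _
        (Finset.mem_image_of_mem _ hβ)
    have hB0 : (0:ℝ) < B := by
      have : (t:ℝ) ^ (β₀ i₀) ≤ B := Finset.le_max' (σ.image fun β => (t:ℝ) ^ (β i₀)) _
        (Finset.mem_image_of_mem _ hβ₀)
      have := zpow_pos ht0 (β₀ i₀)
      linarith
    have hy : Et t β₀ + (Pi.single i₀ (B + 1) : Fin n → ℝ) ∈ Pt t A := by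
      refine add_mem_Pt (subset_convexHull ℝ _ (Set.mem_image_of_mem _ (hσA hβ₀))) ?_
      intro j
      rcases eq_or_ne j i₀ with rfl | hne
      · simp; linarith
      · simp [Pi.single_apply, hne]
    have hle := hbd _ (hPt_sub hy)
    have : (Et t β₀ + (Pi.single i₀ (B + 1) : Fin n → ℝ)) i₀ = t ^ (β₀ i₀) + (B + 1) := by
      simp [Et, Pi.single_apply]
    rw [this] at hle
    have := zpow_pos ht0 (β₀ i₀)
    linarith
  obtain ⟨i₁, hi₁⟩ := hwne
  set m : ℝ := ∑ i, w i * t ^ (β₀ i) with hm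
  have hm0 : 0 < m := by
    refine Finset.sum_pos' (fun i _ => mul_nonneg (hw0 i) (zpow_pos ht0 _).le) ?_
    exact ⟨i₁, Finset.mem_univ _, mul_pos hi₁ (zpow_pos ht0 _)⟩
  have hconst : ∀ β ∈ σ, ∑ i, w i * t ^ (β i) = m := by
    intro β hβ
    have h1 := (hmemF β hβ).2 _ (mem_Pt_of_mem (t := t) (hσA hβ₀))
    have h2 := hβ₀F.2 _ (mem_Pt_of_mem (t := t) (hσA hβ))
    have heq : l (Et t β) = l (Et t β₀) := le_antisymm h2 h1
    rw [hkey, hkey] at heq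
    have : ∑ i, w i * (Et t β) i = ∑ i, w i * (Et t β₀) i := by linarith
    simpa [Et] using this
  have hge : ∀ α ∈ A, m ≤ ∑ i, w i * t ^ (α i) := by
    intro α hα
    have h2 := hβ₀F.2 _ (mem_Pt_of_mem (t := t) hα)
    rw [hkey, hkey] at h2
    have : ∑ i, w i * (Et t α) i ≥ ∑ i, w i * (Et t β₀) i := by linarith
    simpa [Et] using this
  refine ⟨⟨β₀, hβ₀⟩, hσA, ?_⟩
  intro α hα hdom
  have hcoord : ∀ i, w i * t ^ (vee σ i) ≤ m := by
    intro i
    obtain ⟨β, hβ, hβi⟩ := (vee_spec ⟨β₀, hβ₀⟩ i).1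
    rw [← hβi, ← hconst β hβ]
    exact Finset.single_le_sum (fun j _ => mul_nonneg (hw0 j) (zpow_pos ht0 _).le)
      (Finset.mem_univ i)
  have hup : ∑ i, w i * t ^ (α i) ≤ (n : ℝ) * m / t := by
    have hterm : ∀ i : Fin n, w i * t ^ (α i) ≤ w i * t ^ (vee σ i) / t := by
      intro i
      have h1 : α i ≤ vee σ i - 1 := by have := hdom i; omega
      have h2 : (t:ℝ) ^ (α i) ≤ t ^ (vee σ i - 1) := zpow_le_zpow_right₀ ht1.le h1
      have h3 : (t:ℝ) ^ (vee σ i - 1) = t ^ (vee σ i) / t := by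
        rw [zpow_sub₀ (ne_of_gt ht0), zpow_one]
      rw [mul_div_assoc, ← h3]
      exact mul_le_mul_of_nonneg_left h2 (hw0 i)
    calc ∑ i, w i * t ^ (α i) ≤ ∑ i, w i * t ^ (vee σ i) / t :=
          Finset.sum_le_sum fun i _ => hterm i
      _ = (∑ i, w i * t ^ (vee σ i)) / t := by rw [Finset.sum_div]
      _ ≤ ((n : ℝ) * m) / t := by
          have hsum : ∑ i, w i * t ^ (vee σ i) ≤ (n:ℝ) * m := by
            have := Finset.sum_le_card_nsmul Finset.univ
              (fun i => w i * t ^ (vee σ i)) m (fun i _ => hcoord i)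
            simpa [nsmul_eq_mul] using this
          gcongr
  have hlow := hge α hα
  have : (n : ℝ) * m / t < m := by
    rw [div_lt_iff₀ ht0]
    have : (n:ℝ) * m < t * m := by
      apply mul_lt_mul_of_pos_right htn hm0
    linarith [this]
  linarith

lemma exposed_of_dim_zero {t : ℝ} {A : Set (Fin 0 → ℤ)} {σ : Finset (Fin 0 → ℤ)}
    (hσ : σ.Nonempty) (hσA : ↑σ ⊆ A) :
    IsExposedFace (Pt t A) (convexHull ℝ (Et t '' (↑σ : Set (Fin 0 → ℤ)))) := by
  obtain ⟨β₀, hβ₀⟩ := hσ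
  haveI : Subsingleton (Fin 0 → ℝ) := ⟨fun a b => funext fun i => i.elim0⟩
  refine ⟨0, ?_⟩
  apply Set.Subset.antisymm
  · intro x hx
    exact ⟨convHull_subset_Pt hσA hx, fun y hy => by simp⟩
  · rintro x ⟨hxPt, -⟩
    have hx0 : x = Et t β₀ := Subsingleton.elim x _
    rw [hx0]
    exact subset_convexHull ℝ _ (Set.mem_image_of_mem _ hβ₀)

end HullAux

theorem stmt14 {n : ℕ} (Λ : AddSubgroup (Fin n → ℤ)) (hΛ : IsAntichainLattice Λ)
    (A : Set (Fin n → ℤ)) (hA : LambdaFinite Λ A) (hgen : Generic A) :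
    ∃ T : ℝ, 1 < T ∧ ∀ t t' : ℝ, T ≤ t → T ≤ t' →
      ∀ σ : Finset (Fin n → ℤ), σ.Nonempty → ↑σ ⊆ A →
        (IsExposedFace (Pt t A) (convexHull ℝ (Et t '' (↑σ : Set (Fin n → ℤ)))) ↔
          IsExposedFace (Pt t' A) (convexHull ℝ (Et t' '' (↑σ : Set (Fin n → ℤ))))) := by
  refine ⟨4 * n + 4, ?_, ?_⟩
  · have := Nat.cast_nonneg (α := ℝ) n
    linarith
  intro t t' ht ht' σ hσ hσA
  rcases Nat.eq_zero_or_pos n with hn | hn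
  · subst hn
    exact iff_of_true (exposed_of_dim_zero hσ hσA) (exposed_of_dim_zero hσ hσA)
  · have hn0 : (0:ℝ) ≤ (n:ℝ) := Nat.cast_nonneg n
    have h1t : (1:ℝ) < t := by linarith
    have h1t' : (1:ℝ) < t' := by linarith
    have hnt : (n:ℝ) < t := by linarith
    have hnt' : (n:ℝ) < t' := by linarith
    constructor
    · intro hexp
      exact exposed_of_neighborly (by linarith) hgen
        (neighborly_of_exposed hn h1t hnt hσ hσA hexp)
    · intro hexp
      exact exposed_of_neighborly (by linarith) hgen
        (neighborly_of_exposed hn h1t' hnt' hσ hσA hexp)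
end

section
/- Let Λ ⊆ ℤⁿ be an antichain lattice and A ⊆ ℤⁿ a generic Λ-finite set. There exists T > 1 such that for every real t ≥ T the following holds: if F is a nonempty proper exposed face of P_t(A) and the set σ = {α ∈ A : E_t(α) ∈ F} is nonempty and finite, then for every α ∈ A there exists a coordinate index j with αⱼ ≥ (∨σ)ⱼ. -/
open scoped Pointwise

theorem stmt16 {n : ℕ} (Λ : AddSubgroup (Fin n → ℤ)) (hΛ : IsAntichainLattice Λ)
    (A : Set (Fin n → ℤ)) (hA : LambdaFinite Λ A) (hgen : Generic A) :
    ∃ T : ℝ, 1 < T ∧ ∀ t : ℝ, T ≤ t →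
      ∀ F : Set (Fin n → ℝ), IsExposedFace (Pt t A) F → F.Nonempty → F ≠ Pt t A →
        ∀ σ : Finset (Fin n → ℤ),
          (↑σ : Set (Fin n → ℤ)) = {α : Fin n → ℤ | α ∈ A ∧ Et t α ∈ F} →
          σ.Nonempty →
          ∀ α ∈ A, ∃ j : Fin n, vee σ j ≤ α j := by
  refine ⟨(n : ℝ) + 2, by have := Nat.cast_nonneg (α := ℝ) n; linarith, ?_⟩
  intro t ht F hFexp hFne hFneq σ hσ hσne α hαA
  obtain ⟨l, hF⟩ := hFexp
  have hn0 : (0 : ℝ) ≤ n := Nat.cast_nonneg n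
  have ht1 : (1 : ℝ) < t := by linarith
  have ht0 : (0 : ℝ) < t := by linarith
  have htn : (n : ℝ) < t := by linarith
  -- coefficients of l
  set c : Fin n → ℝ := fun i => l (fun j => if i = j then 1 else 0) with hc
  have hl : ∀ x, l x = ∑ i, x i * c i := by
    intro x
    rw [LinearMap.pi_apply_eq_sum_univ l x]
    simp [smul_eq_mul]
    rfl
  -- membership in Pt
  have hCmem : ∀ x ∈ convexHull ℝ (Et t '' A), ∀ y : Fin n → ℝ, (∀ i, 0 ≤ y i) →
      x + y ∈ Pt t A := by
    intro x hx y hy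
    exact Set.add_mem_add hx hy
  have hC : ∀ γ ∈ A, Et t γ ∈ Pt t A := by
    intro γ hγ
    have h1 : Et t γ ∈ convexHull ℝ (Et t '' A) :=
      subset_convexHull ℝ _ ⟨γ, hγ, rfl⟩
    have := hCmem _ h1 0 (fun i => le_rfl)
    simpa using this
  -- σ elements are in F
  have hσF : ∀ β ∈ σ, β ∈ A ∧ Et t β ∈ F := by
    intro β hβ
    have : β ∈ ({α : Fin n → ℤ | α ∈ A ∧ Et t α ∈ F} : Set _) := by
      rw [← hσ]; exact hβ
    exact this
  obtain ⟨β₀, hβ₀⟩ := hσne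
  set m : ℝ := l (Et t β₀) with hm
  have hβ₀F : Et t β₀ ∈ F := (hσF β₀ hβ₀).2
  have hmax : ∀ y ∈ Pt t A, l y ≤ m := by
    have := hβ₀F
    rw [hF] at this
    exact this.2
  -- each face member attains m
  have hattain : ∀ β ∈ σ, l (Et t β) = m := by
    intro β hβ
    obtain ⟨hβA, hβF⟩ := hσF β hβ
    rw [hF] at hβF
    exact le_antisymm (hmax _ (hC β hβA)) (hβF.2 _ (hC β₀ (hσF β₀ hβ₀).1))
  -- coefficients are nonpositive
  have hcle : ∀ i, c i ≤ 0 := by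
    intro i
    have h1 : Et t β₀ ∈ convexHull ℝ (Et t '' A) :=
      subset_convexHull ℝ _ ⟨β₀, (hσF β₀ hβ₀).1, rfl⟩
    have hmem := hCmem _ h1 (fun j => if i = j then 1 else 0)
      (fun j => by by_cases h : i = j <;> simp [h])
    have := hmax _ hmem
    rw [map_add] at this
    have : m + c i ≤ m := by exact this
    linarith
  have hpos : ∀ γ : Fin n → ℤ, ∀ i, (0 : ℝ) < t ^ (γ i) := fun γ i => zpow_pos ht0 _
  -- m < 0
  have hmneg : m < 0 := by
    have hmle : m ≤ 0 := by
      rw [hm, hl]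
      apply Finset.sum_nonpos
      intro i _
      exact mul_nonpos_of_nonneg_of_nonpos (le_of_lt (hpos β₀ i)) (hcle i)
    rcases lt_or_eq_of_le hmle with h | h
    · exact h
    · exfalso
      have hz : ∀ i ∈ Finset.univ, Et t β₀ i * c i = 0 := by
        rw [← Finset.sum_eq_zero_iff_of_nonpos]
        · rw [← hl, ← hm, h]
        · intro i _
          exact mul_nonpos_of_nonneg_of_nonpos (le_of_lt (hpos β₀ i)) (hcle i)
      have hc0 : ∀ i, c i = 0 := by
        intro i
        have := hz i (Finset.mem_univ i)
        have hp := hpos β₀ i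
        rcases mul_eq_zero.mp this with h' | h'
        · exact absurd h' (ne_of_gt hp)
        · exact h'
      apply hFneq
      rw [hF]
      ext x
      simp only [Set.mem_setOf_eq]
      constructor
      · exact fun h => h.1
      · intro hx
        refine ⟨hx, fun y _ => ?_⟩
        simp [hl, hc0]
  -- for each coordinate, m ≤ t^(vee σ i) * c i
  have hkey : ∀ i, m ≤ t ^ (vee σ i) * c i := by
    intro i
    have hne : (σ.image fun β => β i).Nonempty := ⟨β₀ i, Finset.mem_image_of_mem _ hβ₀⟩
    obtain ⟨b, hb⟩ := Finset.max_of_nonempty hne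
    have hbmem : b ∈ σ.image fun β => β i := Finset.mem_of_max hb
    obtain ⟨β, hβσ, hβb⟩ := Finset.mem_image.mp hbmem
    have hvee : vee σ i = β i := by
      rw [vee]; rw [hb, hβb]; rfl
    have hsum : l (Et t β) ≤ t ^ (β i) * c i := by
      rw [hl]
      have hsplit : Et t β i * c i + ∑ j ∈ Finset.univ.erase i, Et t β j * c j
          = ∑ j, Et t β j * c j :=
        Finset.add_sum_erase Finset.univ (fun j => Et t β j * c j) (Finset.mem_univ i)
      rw [← hsplit]
      have hrest : ∑ j ∈ Finset.univ.erase i, Et t β j * c j ≤ 0 :=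
        Finset.sum_nonpos fun j _ =>
          mul_nonpos_of_nonneg_of_nonpos (le_of_lt (hpos β j)) (hcle j)
      have : Et t β i * c i = t ^ (β i) * c i := rfl
      linarith
    rw [hvee]
    calc m = l (Et t β) := (hattain β hβσ).symm
    _ ≤ t ^ (β i) * c i := hsum
  -- suppose α is strictly dominated by vee σ
  by_contra hcon
  push_neg at hcon
  have hαlt : ∀ i, α i ≤ vee σ i - 1 := fun i => by have := hcon i; omega
  have hterm : ∀ i, t ^ (vee σ i) * c i / t ≤ t ^ (α i) * c i := by
    intro i
    have h1 : t ^ (α i) ≤ t ^ (vee σ i - 1) :=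
      zpow_le_zpow_right₀ (le_of_lt ht1) (hαlt i)
    have h2 : t ^ (vee σ i - 1) = t ^ (vee σ i) / t := by
      rw [zpow_sub₀ (ne_of_gt ht0), zpow_one]
    have h3 : t ^ (α i) * c i ≥ t ^ (vee σ i - 1) * c i :=
      mul_le_mul_of_nonpos_right h1 (hcle i)
    rw [h2] at h3
    calc t ^ (vee σ i) * c i / t = t ^ (vee σ i) / t * c i := by ring
    _ ≤ t ^ (α i) * c i := h3
  have hαC : l (Et t α) ≤ m := hmax _ (hC α hαA)
  have hlow : (n : ℝ) * (m / t) ≤ l (Et t α) := by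
    rw [hl]
    calc (n : ℝ) * (m / t) = ∑ _i : Fin n, m / t := by
          rw [Finset.sum_const]
          simp [mul_comm]
    _ ≤ ∑ i, t ^ (vee σ i) * c i / t :=
          Finset.sum_le_sum fun i _ => div_le_div_of_nonneg_right (hkey i) ht0.le
    _ ≤ ∑ i, Et t α i * c i := Finset.sum_le_sum fun i _ => hterm i
  have h1 : (n : ℝ) * (m / t) ≤ m := le_trans hlow hαC
  have h2 : (n : ℝ) * m ≤ m * t := by
    have := mul_le_mul_of_nonneg_right h1 (le_of_lt ht0)
    calc (n : ℝ) * m = (n : ℝ) * (m / t) * t := by field_simp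
    _ ≤ m * t := this
  nlinarith [mul_lt_mul_of_neg_left htn hmneg]
end

section
/- Let p ≥ 1 and let a be a p × p matrix of integers such that for every row index i and every column index k ≠ i one has a(i,i) > a(i,k). Then for every real number t with t > p and t > 1, the p × p real matrix M with entries M(i,k) = t^{a(i,k)} is nonsingular, i.e., det M ≠ 0. (In particular, the p points (t^{a(1,k)}, …, t^{a(p,k)}) ∈ ℝᵖ, for k = 1, …, p, are affinely independent.) -/
theorem stmt18 {p : ℕ} (hp : 1 ≤ p) (a : Matrix (Fin p) (Fin p) ℤ)
    (ha : ∀ i k, k ≠ i → a i k < a i i)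
    (t : ℝ) (ht1 : 1 < t) (htp : (p : ℝ) < t) :
    (Matrix.of fun i k : Fin p => t ^ (a i k)).det ≠ 0 ∧
      AffineIndependent ℝ (fun k : Fin p => fun i : Fin p => t ^ (a i k)) := by
  classical
  have ht0 : (0:ℝ) < t := lt_trans one_pos ht1
  set M : Matrix (Fin p) (Fin p) ℝ := Matrix.of fun i k => t ^ (a i k) with hM
  have hpos : ∀ z : ℤ, (0:ℝ) < t ^ z := fun z => zpow_pos ht0 z
  have key : ∀ i, ∑ k ∈ Finset.univ.erase i, ‖M i k‖ < ‖M i i‖ := by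
    intro i
    calc ∑ k ∈ Finset.univ.erase i, ‖M i k‖
        = ∑ k ∈ Finset.univ.erase i, t ^ (a i k) := by
          refine Finset.sum_congr rfl fun k _ => ?_
          simp [M, Real.norm_eq_abs, norm_zpow, Real.norm_eq_abs, abs_of_pos ht0]
      _ ≤ ∑ _k ∈ Finset.univ.erase i, t ^ (a i i - 1) := by
          refine Finset.sum_le_sum fun k hk => ?_
          have hk' : k ≠ i := Finset.ne_of_mem_erase hk
          have : a i k ≤ a i i - 1 := by have := ha i k hk'; omega
          exact zpow_le_zpow_right₀ ht1.le this
      _ = ((p - 1 : ℕ) : ℝ) * t ^ (a i i - 1) := by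
          rw [Finset.sum_const, nsmul_eq_mul, Finset.card_erase_of_mem (Finset.mem_univ i),
            Finset.card_univ, Fintype.card_fin]
      _ < t * t ^ (a i i - 1) := by
          refine mul_lt_mul_of_pos_right ?_ (hpos _)
          calc ((p - 1 : ℕ) : ℝ) ≤ (p : ℝ) := by exact_mod_cast Nat.sub_le p 1
            _ < t := htp
      _ = t ^ (a i i) := by
          rw [← zpow_one_add₀ (ne_of_gt ht0)]
          norm_num
      _ = ‖M i i‖ := by simp [M, Real.norm_eq_abs, norm_zpow, Real.norm_eq_abs, abs_of_pos ht0]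
  have hdet : M.det ≠ 0 := det_ne_zero_of_sum_row_lt_diag key
  refine ⟨hdet, ?_⟩
  have hunit : IsUnit M := (Matrix.isUnit_iff_isUnit_det M).mpr (isUnit_iff_ne_zero.mpr hdet)
  have hli : LinearIndependent ℝ (fun k => M.transpose k) :=
    Matrix.linearIndependent_cols_iff_isUnit.mpr hunit
  have : AffineIndependent ℝ (fun k => M.transpose k) := by
    rw [affineIndependent_iff]
    intro s w hw hsum e he
    have hall := Fintype.linearIndependent_iff.mp hli (fun k => if k ∈ s then w k else 0) ?_
    · have := hall e; simpa [he] using this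
    · calc ∑ k, (if k ∈ s then w k else 0) • M.transpose k
          = ∑ k ∈ s, w k • M.transpose k := by
            simp only [ite_smul, zero_smul]
            rw [Finset.sum_ite_mem, Finset.univ_inter]
        _ = 0 := hsum
  exact this
end
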